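/- arXiv:1908.09196 — 4 statements merged into one kernel-verified Lean document; each statement's English description precedes it below -/
import Mathlib

section
/- Let ν ≥ 1 be an integer and let A, B ∈ ℂ[[u]] be convergent formal power series with ord(A) = ν − 1 and B(0) ≠ 0. Then every formal power series s ∈ ℂ[[t]] with ord(s) = 1 satisfying A(s(t))·s'(t) = t^{ν−1}·B(s(t)) is convergent. -/
/-- Composition `A(s(t))` of formal power series (intended for `s` with zero
constant term, in which case `coeff n (s^k) = 0` for `k > n`). -/
noncomputable def pscomp (A s : PowerSeries ℂ) : PowerSeries ℂ :=
  PowerSeries.mk fun n => ∑ k ∈ Finset.range (n + 1),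
    (PowerSeries.coeff k A) * PowerSeries.coeff n (s ^ k)

open PowerSeries Finset

set_option linter.deprecated false in
theorem coeff_derivativeFun' (f : ℂ⟦X⟧) (n : ℕ) :
    coeff n (derivativeFun f) = coeff (n + 1) f * (n + 1) :=
  coeff_derivative f n



namespace Aux

lemma coeff_pow_eq_zero {s : PowerSeries ℂ} (hs : constantCoeff s = 0) :
    ∀ (k n : ℕ), n < k → coeff n (s ^ k) = 0 := by
  intro k
  induction k with
  | zero => intro n h; omega
  | succ k ih =>
    intro n h
    rw [pow_succ, PowerSeries.coeff_mul]
    apply Finset.sum_eq_zero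
    rintro ⟨p, q⟩ hpq
    rw [Finset.HasAntidiagonal.mem_antidiagonal] at hpq
    rcases Nat.eq_zero_or_pos q with hq | hq
    · have h0 : coeff 0 s = 0 := by rw [PowerSeries.coeff_zero_eq_constantCoeff, hs]
      subst hq
      simp [h0]
    · have hp : p < k := by omega
      rw [ih p hp, zero_mul]

lemma coeff_mul_congr {u v w x : PowerSeries ℂ} {n : ℕ}
    (h1 : ∀ j ≤ n, coeff j u = coeff j v)
    (h2 : ∀ j ≤ n, coeff j w = coeff j x) :
    coeff n (u * w) = coeff n (v * x) := by
  rw [PowerSeries.coeff_mul, PowerSeries.coeff_mul]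
  apply Finset.sum_congr rfl
  rintro ⟨p, q⟩ hpq
  rw [Finset.HasAntidiagonal.mem_antidiagonal] at hpq
  rw [h1 p (by omega), h2 q (by omega)]

lemma coeff_pscomp (F s : PowerSeries ℂ) (n : ℕ) :
    coeff n (pscomp F s) = ∑ k ∈ Finset.range (n + 1),
      (coeff k F) * coeff n (s ^ k) := by
  rw [pscomp, coeff_mk]

lemma coeff_pscomp_aeval {F s : PowerSeries ℂ} (hs : constantCoeff s = 0)
    {n m : ℕ} (hn : n ≤ m) :
    coeff n (pscomp F s) = coeff n (Polynomial.aeval s (trunc (m+1) F)) := by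
  rw [coeff_pscomp, Polynomial.aeval_eq_sum_range' (natDegree_trunc_lt F m) s, map_sum]
  rw [Finset.sum_subset (Finset.range_subset_range.2 (by omega : n + 1 ≤ m + 1))]
  · apply Finset.sum_congr rfl
    intro k hk
    rw [Finset.mem_range] at hk
    rw [coeff_smul, coeff_trunc, if_pos hk, smul_eq_mul]
  · intro k _ hk
    rw [Finset.mem_range, not_lt] at hk
    rw [coeff_pow_eq_zero hs k n (by omega), mul_zero]

lemma coeff_aeval_eq_zero {s : PowerSeries ℂ} (hs : constantCoeff s = 0)
    {n N : ℕ} (hn : n < N) {P : Polynomial ℂ} (hP : ∀ k, k < N → P.coeff k = 0) :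
    coeff n (Polynomial.aeval s P) = 0 := by
  rw [Polynomial.aeval_eq_sum_range, map_sum]
  apply Finset.sum_eq_zero
  intro k _
  rcases lt_or_ge k N with h | h
  · rw [hP k h, zero_smul, map_zero]
  · rw [coeff_smul, coeff_pow_eq_zero hs k n (by omega), smul_zero]

lemma pscomp_mul {F G s : PowerSeries ℂ} (hs : constantCoeff s = 0) :
    pscomp (F * G) s = pscomp F s * pscomp G s := by
  ext n
  rw [coeff_pscomp_aeval hs (le_refl n)]
  have hD : ∀ k, k < n + 1 →
      (trunc (n+1) (F*G) - trunc (n+1) F * trunc (n+1) G).coeff k = 0 := by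
    intro k hk
    rw [Polynomial.coeff_sub, coeff_trunc, if_pos hk, Polynomial.coeff_mul,
      PowerSeries.coeff_mul]
    rw [sub_eq_zero]
    apply Finset.sum_congr rfl
    rintro ⟨p, q⟩ hpq
    rw [Finset.HasAntidiagonal.mem_antidiagonal] at hpq
    rw [coeff_trunc, coeff_trunc, if_pos (by omega), if_pos (by omega)]
  have h0 : coeff n (Polynomial.aeval s (trunc (n+1) (F*G)
      - trunc (n+1) F * trunc (n+1) G)) = 0 :=
    coeff_aeval_eq_zero hs (by omega) hD
  rw [map_sub, map_sub, map_mul (Polynomial.aeval s)] at h0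
  have := sub_eq_zero.1 h0
  rw [this, coeff_mul_congr
    (fun j hj => (coeff_pscomp_aeval hs hj).symm)
    (fun j hj => (coeff_pscomp_aeval hs hj).symm)]

lemma pscomp_one (s : PowerSeries ℂ) : pscomp 1 s = 1 := by
  ext n
  rw [coeff_pscomp]
  rw [Finset.sum_eq_single 0]
  · simp
  · intro k _ hk
    rw [PowerSeries.coeff_one, if_neg hk, zero_mul]
  · intro h; simp at h

lemma pscomp_X {s : PowerSeries ℂ} (hs : constantCoeff s = 0) :
    pscomp X s = s := by
  ext n
  rw [coeff_pscomp]
  rcases Nat.eq_zero_or_pos n with h | h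
  · subst h
    simp [PowerSeries.coeff_zero_eq_constantCoeff, hs]
  · rw [Finset.sum_eq_single 1]
    · simp
    · intro k _ hk
      rw [PowerSeries.coeff_X, if_neg hk, zero_mul]
    · intro hmem
      exfalso; apply hmem; rw [Finset.mem_range]; omega

lemma pscomp_add (F G s : PowerSeries ℂ) :
    pscomp (F + G) s = pscomp F s + pscomp G s := by
  ext n
  simp [coeff_pscomp, add_mul, Finset.sum_add_distrib]

lemma pscomp_smul (a : ℂ) (F s : PowerSeries ℂ) :
    pscomp (a • F) s = a • pscomp F s := by
  ext n
  simp [coeff_pscomp, Finset.mul_sum, mul_assoc]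

lemma pscomp_pow {F s : PowerSeries ℂ} (hs : constantCoeff s = 0) (k : ℕ) :
    pscomp (F ^ k) s = (pscomp F s) ^ k := by
  induction k with
  | zero => simpa using pscomp_one s
  | succ k ih => rw [pow_succ, pow_succ, pscomp_mul hs, ih]

lemma constantCoeff_pscomp (F s : PowerSeries ℂ) :
    constantCoeff (pscomp F s) = coeff 0 F * constantCoeff s ^ 0 := by
  have := coeff_pscomp F s 0
  rw [PowerSeries.coeff_zero_eq_constantCoeff] at this
  simpa using this

end Aux

namespace Aux2

lemma derivativeFun_pow (s : PowerSeries ℂ) (k : ℕ) :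
    derivativeFun (s ^ (k+1)) = ((k:ℂ⟦X⟧) + 1) * s ^ k * derivativeFun s := by
  induction k with
  | zero => simp [derivativeFun]
  | succ k ih =>
    rw [pow_succ, derivativeFun_mul, ih]
    simp only [smul_eq_mul]
    push_cast
    ring

lemma derivativeFun_aeval (P : Polynomial ℂ) (s : PowerSeries ℂ) :
    derivativeFun (Polynomial.aeval s P)
      = Polynomial.aeval s (Polynomial.derivative P) * derivativeFun s := by
  induction P using Polynomial.induction_on' with
  | add p q hp hq => rw [map_add, derivativeFun_add, hp, hq, map_add, map_add, add_mul]
  | monomial k a =>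
    rw [Polynomial.aeval_monomial, Polynomial.derivative_monomial, Polynomial.aeval_monomial]
    cases k with
    | zero =>
      simp only [pow_zero, mul_one, Nat.cast_zero, mul_zero, map_zero, Nat.zero_sub, zero_mul]
      exact derivativeFun_C
    | succ k =>
      rw [derivativeFun_mul]
      have hC : derivativeFun (algebraMap ℂ ℂ⟦X⟧ a) = 0 := derivativeFun_C
      rw [hC, smul_zero, add_zero, derivativeFun_pow]
      simp only [smul_eq_mul]
      have : (algebraMap ℂ ℂ⟦X⟧) (a * ((k:ℕ)+1:ℕ)) = algebraMap ℂ ℂ⟦X⟧ a * ((k:ℂ⟦X⟧)+1) := by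
        rw [map_mul]
        congr 1
        push_cast
        simp [map_add, map_natCast]
      rw [Nat.add_sub_cancel, this]
      ring

end Aux2

namespace Aux3

lemma ext_of_deriv {f g : ℂ⟦X⟧} (hD : derivativeFun f = derivativeFun g)
    (hc : constantCoeff f = constantCoeff g) : f = g := by
  ext n
  cases n with
  | zero => simpa only [coeff_zero_eq_constantCoeff_apply] using hc
  | succ n =>
    have h := congrArg (coeff n) hD
    rw [coeff_derivativeFun', coeff_derivativeFun'] at h
    have hne : ((n:ℂ)+1) ≠ 0 := Nat.cast_add_one_ne_zero n
    exact mul_right_cancel₀ hne h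

noncomputable def binS (α : ℂ) : ℂ⟦X⟧ :=
  PowerSeries.mk fun k => (∏ j ∈ Finset.range k, (α - j)) / k.factorial

lemma binS_c0 (α : ℂ) : constantCoeff (binS α) = 1 := by
  rw [binS, constantCoeff_mk]
  simp

lemma binS_coeff_succ (α : ℂ) (n : ℕ) :
    coeff (n+1) (binS α) * ((n:ℂ)+1) = (α - n) * coeff n (binS α) := by
  rw [binS, coeff_mk, coeff_mk, Finset.prod_range_succ, Nat.factorial_succ]
  have h1 : ((n.factorial : ℕ) : ℂ) ≠ 0 := by exact_mod_cast Nat.factorial_ne_zero n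
  have h2 : ((n:ℂ)+1) ≠ 0 := Nat.cast_add_one_ne_zero n
  push_cast
  field_simp

lemma binS_ode (α : ℂ) :
    (1 + X) * derivativeFun (binS α) = C α * binS α := by
  ext n
  rw [add_mul, one_mul, map_add, PowerSeries.coeff_C_mul]
  cases n with
  | zero =>
    rw [coeff_zero_X_mul, add_zero, coeff_derivativeFun']
    have h := binS_coeff_succ α 0
    push_cast at h ⊢
    linear_combination h
  | succ n =>
    rw [coeff_succ_X_mul, coeff_derivativeFun', coeff_derivativeFun']
    have h1 := binS_coeff_succ α (n+1)
    push_cast at h1 ⊢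
    linear_combination h1

lemma binS_unique {α : ℂ} {f : ℂ⟦X⟧} (hf0 : constantCoeff f = 1)
    (hode : (1 + X) * derivativeFun f = C α * f) : f = binS α := by
  ext n
  induction n with
  | zero =>
    rw [coeff_zero_eq_constantCoeff_apply, coeff_zero_eq_constantCoeff_apply, hf0, binS_c0]
  | succ n ih =>
    have h := congrArg (coeff n) hode
    rw [add_mul, one_mul, map_add, PowerSeries.coeff_C_mul] at h
    have hfs : coeff (n+1) f * ((n:ℂ)+1) = (α - n) * coeff n f := by
      cases n with
      | zero =>
        rw [coeff_zero_X_mul, add_zero, coeff_derivativeFun'] at h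
        push_cast at h ⊢
        linear_combination h
      | succ m =>
        rw [coeff_succ_X_mul, coeff_derivativeFun', coeff_derivativeFun'] at h
        push_cast at h ⊢
        linear_combination h
    have hbs := binS_coeff_succ α n
    rw [ih] at hfs
    have hne : ((n:ℂ)+1) ≠ 0 := Nat.cast_add_one_ne_zero n
    exact mul_right_cancel₀ hne (hfs.trans hbs.symm)

lemma binS_mul (α β : ℂ) : binS α * binS β = binS (α + β) := by
  apply binS_unique
  · rw [map_mul, binS_c0, binS_c0, mul_one]
  · rw [derivativeFun_mul]
    have : (1 + X) * (binS α • derivativeFun (binS β) + binS β • derivativeFun (binS α))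
        = binS α * ((1+X) * derivativeFun (binS β)) + binS β * ((1+X) * derivativeFun (binS α)) := by
      simp only [smul_eq_mul]; ring
    rw [this, binS_ode, binS_ode, map_add]
    ring

lemma binS_one_eq : binS 1 = 1 + X := by
  symm
  apply binS_unique
  · simp
  · have : derivativeFun ((1:ℂ⟦X⟧) + X) = 1 := by
      ext n
      rw [derivativeFun_add, derivativeFun_one]
      simp only [map_add, map_zero, zero_add, coeff_derivativeFun', PowerSeries.coeff_X,
        PowerSeries.coeff_one]
      split_ifs <;> simp_all
    rw [this, mul_one, map_one, one_mul]

lemma binS_zero_eq : binS 0 = 1 := by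
  symm
  apply binS_unique
  · simp
  · rw [derivativeFun_one, mul_zero, map_zero, zero_mul]

lemma binS_pow (α : ℂ) (m : ℕ) : (binS α) ^ m = binS (m * α) := by
  induction m with
  | zero => simp only [pow_zero, Nat.cast_zero, zero_mul]; exact binS_zero_eq.symm
  | succ m ih =>
    rw [pow_succ, ih, binS_mul]
    congr 1
    push_cast
    ring

lemma binS_root (ν : ℕ) (hν : 1 ≤ ν) : (binS ((ν:ℂ)⁻¹)) ^ ν = 1 + X := by
  rw [binS_pow]
  have hne : (ν:ℂ) ≠ 0 := Nat.cast_ne_zero.2 (by omega)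
  rw [mul_inv_cancel₀ hne, binS_one_eq]

lemma binS_coeff_norm_le (ν : ℕ) (hν : 1 ≤ ν) (k : ℕ) :
    ‖coeff k (binS ((ν:ℂ)⁻¹))‖ ≤ 1 := by
  rw [binS, coeff_mk, norm_div, norm_prod]
  have hfac : ‖((k.factorial : ℕ) : ℂ)‖ = (k.factorial : ℝ) := Complex.norm_natCast _
  rw [hfac, div_le_one (by exact_mod_cast Nat.factorial_pos k)]
  calc ∏ j ∈ Finset.range k, ‖(ν:ℂ)⁻¹ - (j:ℂ)‖
      ≤ ∏ j ∈ Finset.range k, ((j:ℝ) + 1) := by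
        apply Finset.prod_le_prod
        · intro j _; positivity
        · intro j _
          calc ‖(ν:ℂ)⁻¹ - (j:ℂ)‖ ≤ ‖(ν:ℂ)⁻¹‖ + ‖(j:ℂ)‖ := norm_sub_le _ _
            _ ≤ 1 + j := by
                apply add_le_add
                · rw [norm_inv, Complex.norm_natCast]
                  have h1 : (1:ℝ) ≤ (ν:ℝ) := by exact_mod_cast hν
                  exact inv_le_one_of_one_le₀ h1
                · rw [Complex.norm_natCast]
            _ = (j:ℝ) + 1 := by ring
    _ = (k.factorial : ℝ) := by
        rw [← Finset.prod_range_add_one_eq_factorial]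
        push_cast
        rfl

end Aux3

namespace Aux4

/-- partial geometric sums are at most `(1-x)⁻¹` -/
lemma geom_partial_le {x : ℝ} (h0 : 0 ≤ x) (h1 : x < 1) (T : Finset ℕ) :
    ∑ p ∈ T, x ^ p ≤ (1 - x)⁻¹ := by
  have hs : Summable fun p : ℕ => x ^ p := summable_geometric_of_lt_one h0 h1
  calc ∑ p ∈ T, x ^ p ≤ ∑' p : ℕ, x ^ p :=
        Summable.sum_le_tsum T (fun i _ => by positivity) hs
    _ = (1 - x)⁻¹ := tsum_geometric_of_lt_one h0 h1

/-- partial sums of shifted geometric: `∑_{p∈T} x^(p+1) ≤ x/(1-x)` -/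
lemma geom_partial_shift_le {x : ℝ} (h0 : 0 ≤ x) (h1 : x < 1) (T : Finset ℕ) :
    ∑ p ∈ T, x ^ (p+1) ≤ x * (1 - x)⁻¹ := by
  have : ∑ p ∈ T, x ^ (p+1) = x * ∑ p ∈ T, x ^ p := by
    rw [Finset.mul_sum]; apply Finset.sum_congr rfl; intro p _; ring
  rw [this]
  exact mul_le_mul_of_nonneg_left (geom_partial_le h0 h1 T) h0

lemma geo_of_summable {F : ℂ⟦X⟧} {r : ℝ} (hr : 0 < r)
    (h : Summable fun i : ℕ => ‖coeff i F‖ * r ^ i) :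
    ∃ C R : ℝ, 0 < C ∧ 0 < R ∧ ∀ n, ‖coeff n F‖ ≤ C * R ^ n := by
  set T := ∑' i : ℕ, ‖coeff i F‖ * r ^ i with hT
  refine ⟨max T 1, r⁻¹, lt_of_lt_of_le one_pos (le_max_right _ _), by positivity, fun n => ?_⟩
  have h1 : ‖coeff n F‖ * r ^ n ≤ T := Summable.le_tsum h n (fun j _ => by positivity)
  have h2 : ‖coeff n F‖ ≤ T * (r⁻¹) ^ n := by
    rw [inv_pow, ← div_eq_mul_inv, le_div_iff₀ (by positivity)]
    exact h1
  calc ‖coeff n F‖ ≤ T * (r⁻¹)^n := h2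
    _ ≤ max T 1 * (r⁻¹)^n := by
        apply mul_le_mul_of_nonneg_right (le_max_left _ _) (by positivity)

lemma summable_of_geo {s : ℂ⟦X⟧} {C R : ℝ} (hR : 0 < R)
    (h : ∀ n, ‖coeff n s‖ ≤ C * R ^ n) :
    ∃ r : ℝ, 0 < r ∧ Summable fun i : ℕ => ‖coeff i s‖ * r ^ i := by
  refine ⟨(2*R)⁻¹, by positivity, ?_⟩
  have key : ∀ i : ℕ, ‖coeff i s‖ * ((2*R)⁻¹) ^ i ≤ C * (2⁻¹ : ℝ) ^ i := by
    intro i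
    have h1 : ‖coeff i s‖ * ((2*R)⁻¹) ^ i ≤ (C * R^i) * ((2*R)⁻¹)^i :=
      mul_le_mul_of_nonneg_right (h i) (by positivity)
    have h2 : (C * R^i) * ((2*R)⁻¹)^i = C * (2⁻¹:ℝ)^i := by
      have : R * (2*R)⁻¹ = 2⁻¹ := by field_simp
      calc (C * R^i) * ((2*R)⁻¹)^i = C * (R * (2*R)⁻¹)^i := by rw [mul_pow]; ring
        _ = C * (2⁻¹:ℝ)^i := by rw [this]
    exact h1.trans_eq h2
  exact Summable.of_nonneg_of_le (fun i => by positivity) key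
    ((summable_geometric_of_lt_one (by norm_num) (by norm_num)).mul_left C)

lemma geo_mul {F G : ℂ⟦X⟧} {C1 R1 C2 R2 : ℝ} (hC1 : 0 < C1) (hR1 : 0 < R1)
    (hC2 : 0 < C2) (hR2 : 0 < R2)
    (h1 : ∀ n, ‖coeff n F‖ ≤ C1 * R1 ^ n) (h2 : ∀ n, ‖coeff n G‖ ≤ C2 * R2 ^ n) :
    ∀ n, ‖coeff n (F * G)‖ ≤ (C1*C2) * (2 * max R1 R2) ^ n := by
  intro n
  rw [PowerSeries.coeff_mul]
  calc ‖∑ p ∈ Finset.HasAntidiagonal.antidiagonal n, coeff p.1 F * coeff p.2 G‖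
      ≤ ∑ p ∈ Finset.HasAntidiagonal.antidiagonal n, ‖coeff p.1 F * coeff p.2 G‖ := norm_sum_le _ _
    _ ≤ ∑ p ∈ Finset.HasAntidiagonal.antidiagonal n, C1*C2 * (max R1 R2) ^ n := by
        apply Finset.sum_le_sum
        rintro ⟨p, q⟩ hpq
        rw [Finset.HasAntidiagonal.mem_antidiagonal] at hpq
        rw [norm_mul]
        calc ‖coeff p F‖ * ‖coeff q G‖ ≤ (C1 * R1^p) * (C2 * R2^q) := by
              apply mul_le_mul (h1 p) (h2 q) (norm_nonneg _) (by positivity)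
          _ ≤ C1*C2 * (max R1 R2)^n := by
              rw [← hpq, pow_add]
              have e1 : R1^p ≤ (max R1 R2)^p :=
                pow_le_pow_left₀ (le_of_lt hR1) (le_max_left _ _) p
              have e2 : R2^q ≤ (max R1 R2)^q :=
                pow_le_pow_left₀ (le_of_lt hR2) (le_max_right _ _) q
              calc C1 * R1^p * (C2 * R2^q) = (C1*C2) * (R1^p * R2^q) := by ring
                _ ≤ (C1*C2) * ((max R1 R2)^p * (max R1 R2)^q) := by
                    apply mul_le_mul_of_nonneg_left _ (by positivity)
                    apply mul_le_mul e1 e2 (by positivity) (by positivity)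
    _ = (n+1 : ℝ) * (C1*C2 * (max R1 R2)^n) := by
        rw [Finset.sum_const, Finset.Nat.card_antidiagonal]
        push_cast; ring
    _ ≤ (C1*C2) * (2 * max R1 R2)^n := by
        rw [mul_pow]
        have hn2 : (n+1 : ℝ) ≤ 2^n := by
          have := (Nat.lt_two_pow_self (n := n))
          exact_mod_cast this
        calc (n+1 : ℝ) * (C1*C2 * (max R1 R2)^n)
            ≤ (2:ℝ)^n * (C1*C2 * (max R1 R2)^n) := by
              apply mul_le_mul_of_nonneg_right hn2 (by positivity)
          _ = C1*C2 * ((2:ℝ)^n * (max R1 R2)^n) := by ring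

lemma geo_inv {F G : ℂ⟦X⟧} {C R : ℝ} (hC : 0 < C) (hR : 0 < R)
    (hgeo : ∀ n, ‖coeff n F‖ ≤ C * R ^ n)
    (h0 : constantCoeff F ≠ 0) (hFG : F * G = 1) :
    ∃ C' R' : ℝ, 0 < C' ∧ 0 < R' ∧ ∀ n, ‖coeff n G‖ ≤ C' * R' ^ n := by
  set c0 : ℝ := ‖(constantCoeff F)⁻¹‖ with hc0
  have hc0pos : 0 < c0 := by
    rw [hc0, norm_pos_iff]
    exact inv_ne_zero h0
  set C' : ℝ := c0 with hC'
  set R' : ℝ := R * (1 + 2 * c0 * C) with hR'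
  have hR'pos : 0 < R' := by positivity
  have hRR' : R / R' = (1 + 2*c0*C)⁻¹ := by
    rw [hR']; field_simp
  have hxlt : R / R' < 1 := by
    rw [hRR']
    rw [inv_lt_one_iff₀]
    right; nlinarith
  have hxpos : 0 < R / R' := by positivity
  have hG0 : constantCoeff G = (constantCoeff F)⁻¹ := by
    have h := congrArg (constantCoeff) hFG
    rw [map_mul, map_one] at h
    field_simp
    linear_combination h
  refine ⟨C', R', hc0pos, hR'pos, ?_⟩
  intro n
  induction n using Nat.strong_induction_on with
  | _ n ih =>
    cases n with
    | zero =>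
      simp only [pow_zero, mul_one]
      rw [coeff_zero_eq_constantCoeff_apply, hG0]
    | succ n =>
      have h := congrArg (coeff (n+1)) hFG
      rw [PowerSeries.coeff_mul, PowerSeries.coeff_one, if_neg (Nat.succ_ne_zero n),
        Finset.Nat.sum_antidiagonal_eq_sum_range_succ_mk, Finset.sum_range_succ'] at h
      -- h : (∑ i ∈ range (n+1), coeff (i+1) F * coeff (n+1-(i+1)) G) + coeff 0 F * coeff (n+1-0) G = 0
      have hF0G : coeff 0 F * coeff (n+1) G
          = - ∑ i ∈ Finset.range (n+1), coeff (i+1) F * coeff (n+1-(i+1)) G := by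
        simp only [Prod.fst, Prod.snd, Nat.sub_zero] at h
        linear_combination h
      have hnorm : ‖coeff 0 F‖ * ‖coeff (n+1) G‖
          ≤ C * C' * R' ^ (n+1) * (2*c0*C)⁻¹ := by
        rw [← norm_mul, hF0G, norm_neg]
        calc ‖∑ i ∈ Finset.range (n+1), coeff (i+1) F * coeff (n+1-(i+1)) G‖
            ≤ ∑ i ∈ Finset.range (n+1), ‖coeff (i+1) F * coeff (n+1-(i+1)) G‖ :=
              norm_sum_le _ _
          _ ≤ ∑ i ∈ Finset.range (n+1), C * C' * R'^(n+1) * (R/R')^(i+1) := by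
              apply Finset.sum_le_sum
              intro i hi
              rw [Finset.mem_range] at hi
              rw [norm_mul]
              have e1 : ‖coeff (i+1) F‖ ≤ C * R^(i+1) := hgeo (i+1)
              have e2 : ‖coeff (n+1-(i+1)) G‖ ≤ C' * R'^(n+1-(i+1)) :=
                ih (n+1-(i+1)) (by omega)
              calc ‖coeff (i+1) F‖ * ‖coeff (n+1-(i+1)) G‖
                  ≤ (C * R^(i+1)) * (C' * R'^(n+1-(i+1))) :=
                    mul_le_mul e1 e2 (norm_nonneg _) (by positivity)
                _ = C * C' * R'^(n+1) * (R/R')^(i+1) := by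
                    have hsplit : R'^(n+1) = R'^(i+1) * R'^(n+1-(i+1)) := by
                      rw [← pow_add]
                      congr 1
                      omega
                    rw [hsplit, div_pow]
                    field_simp
          _ = C * C' * R'^(n+1) * ∑ i ∈ Finset.range (n+1), (R/R')^(i+1) := by
              rw [Finset.mul_sum]
          _ ≤ C * C' * R'^(n+1) * ((R/R') * (1 - R/R')⁻¹) := by
              apply mul_le_mul_of_nonneg_left
                (geom_partial_shift_le (le_of_lt hxpos) hxlt _) (by positivity)
          _ = C * C' * R'^(n+1) * (2*c0*C)⁻¹ := by
              congr 1
              rw [hRR']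
              have hpos1 : (1 + 2*c0*C) ≠ 0 := by positivity
              have hc0ne : c0 ≠ 0 := ne_of_gt hc0pos
              rw [show (1 - (1 + 2*c0*C)⁻¹) = (2*c0*C)/(1+2*c0*C) by
                rw [eq_div_iff hpos1, sub_mul, one_mul, inv_mul_cancel₀ hpos1]; ring]
              field_simp
      have hF0norm : ‖coeff 0 F‖ = c0⁻¹ := by
        rw [coeff_zero_eq_constantCoeff_apply,
          show c0 = ‖(constantCoeff F)⁻¹‖ from hC'.symm.trans hc0, norm_inv, inv_inv]
      rw [hF0norm] at hnorm
      have hfin : ‖coeff (n+1) G‖ ≤ C' * R'^(n+1) / 2 := by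
        have hc0ne : c0 ≠ 0 := ne_of_gt hc0pos
        have hCne : C ≠ 0 := ne_of_gt hC
        rw [inv_mul_le_iff₀ (by positivity)] at hnorm
        calc ‖coeff (n+1) G‖ ≤ c0 * (C * C' * R'^(n+1) * (2*c0*C)⁻¹) := hnorm
          _ = C' * R'^(n+1) / 2 := by field_simp
      calc ‖coeff (n+1) G‖ ≤ C' * R'^(n+1)/2 := hfin
        _ ≤ C' * R'^(n+1) := by
            have : 0 ≤ C' * R'^(n+1) := by positivity
            linarith

end Aux4


namespace Aux4x
lemma geom_partial_le {x : ℝ} (h0 : 0 ≤ x) (h1 : x < 1) (T : Finset ℕ) :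
    ∑ p ∈ T, x ^ p ≤ (1 - x)⁻¹ := by
  have hs : Summable fun p : ℕ => x ^ p := summable_geometric_of_lt_one h0 h1
  calc ∑ p ∈ T, x ^ p ≤ ∑' p : ℕ, x ^ p :=
        Summable.sum_le_tsum T (fun i _ => by positivity) hs
    _ = (1 - x)⁻¹ := tsum_geometric_of_lt_one h0 h1

lemma geom_partial_shift_le {x : ℝ} (h0 : 0 ≤ x) (h1 : x < 1) (T : Finset ℕ) :
    ∑ p ∈ T, x ^ (p+1) ≤ x * (1 - x)⁻¹ := by
  have : ∑ p ∈ T, x ^ (p+1) = x * ∑ p ∈ T, x ^ p := by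
    rw [Finset.mul_sum]; apply Finset.sum_congr rfl; intro p _; ring
  rw [this]
  exact mul_le_mul_of_nonneg_left (geom_partial_le h0 h1 T) h0
end Aux4x

namespace Aux5

noncomputable def wt (ρ : ℝ) (j : ℕ) : ℝ := if j = 0 then 0 else ρ^j / (j:ℝ)^2

lemma wt_zero (ρ : ℝ) : wt ρ 0 = 0 := by simp [wt]

lemma wt_of_pos (ρ : ℝ) {j : ℕ} (hj : 1 ≤ j) : wt ρ j = ρ^j / (j:ℝ)^2 := by
  rw [wt, if_neg (by omega)]

lemma wt_nonneg {ρ : ℝ} (hρ : 0 < ρ) (j : ℕ) : 0 ≤ wt ρ j := by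
  rw [wt]; split_ifs with h
  · exact le_refl 0
  · positivity

lemma wt_le_pow {ρ : ℝ} (hρ : 0 < ρ) (j : ℕ) : wt ρ j ≤ ρ^j := by
  rw [wt]; split_ifs with h
  · positivity
  · rw [div_le_iff₀ (by positivity)]
    have h1 : (1:ℝ) ≤ (j:ℝ)^2 := by
      have h2 : 1 ≤ j := by omega
      have h3 : (1:ℝ) ≤ (j:ℝ) := by exact_mod_cast h2
      nlinarith
    nlinarith [pow_pos hρ j]

lemma telescope_sum : ∀ N : ℕ, ∑ j ∈ Finset.range N, ((1:ℝ)/(j+1) - 1/(j+2)) = 1 - 1/(N+1) := by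
  intro N
  induction N with
  | zero => simp
  | succ N ih =>
    rw [Finset.sum_range_succ, ih]
    have h1 : ((N:ℝ)+1) ≠ 0 := by positivity
    have h2 : ((N:ℝ)+2) ≠ 0 := by positivity
    push_cast
    field_simp
    ring

lemma inv_sq_sum_le (N : ℕ) : ∑ j ∈ Finset.range N, (1:ℝ)/((j:ℝ)+1)^2 ≤ 2 := by
  calc ∑ j ∈ Finset.range N, (1:ℝ)/((j:ℝ)+1)^2
      ≤ ∑ j ∈ Finset.range N, 2*((1:ℝ)/(j+1) - 1/(j+2)) := by
        apply Finset.sum_le_sum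
        intro j _
        have h1 : (0:ℝ) < (j:ℝ)+1 := by positivity
        have h2 : (0:ℝ) < (j:ℝ)+2 := by positivity
        have key : 2*((1:ℝ)/((j:ℝ)+1) - 1/((j:ℝ)+2)) - 1/((j:ℝ)+1)^2
            = ((j:ℝ))/(((j:ℝ)+1)^2*((j:ℝ)+2)) := by
          field_simp
          ring
        have hpos : (0:ℝ) ≤ ((j:ℝ))/(((j:ℝ)+1)^2*((j:ℝ)+2)) := by positivity
        linarith [key, hpos]
    _ = 2 * (1 - 1/(N+1)) := by rw [← Finset.mul_sum, telescope_sum]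
    _ ≤ 2 := by
        have h3 : 0 ≤ 1/((N:ℝ)+1) := by positivity
        nlinarith

noncomputable def aa (j : ℕ) : ℝ := if j = 0 then 0 else 1/(j:ℝ)^2

lemma aa_nonneg (j : ℕ) : 0 ≤ aa j := by
  rw [aa]; split_ifs
  · exact le_refl 0
  · positivity

lemma aa_sum_le (N : ℕ) : ∑ j ∈ Finset.range N, aa j ≤ 2 := by
  cases N with
  | zero => simp
  | succ N =>
    rw [Finset.sum_range_succ']
    have h0 : aa 0 = 0 := by simp [aa]
    rw [h0, add_zero]
    calc ∑ j ∈ Finset.range N, aa (j+1) = ∑ j ∈ Finset.range N, (1:ℝ)/((j:ℝ)+1)^2 := by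
          apply Finset.sum_congr rfl
          intro j _
          rw [aa, if_neg (by omega)]
          push_cast
          ring_nf
      _ ≤ 2 := inv_sq_sum_le N

lemma wt_conv {ρ : ℝ} (hρ : 0 < ρ) (n : ℕ) :
    ∑ p ∈ Finset.HasAntidiagonal.antidiagonal n, wt ρ p.1 * wt ρ p.2 ≤ 8 * wt ρ n := by
  rw [Finset.Nat.sum_antidiagonal_eq_sum_range_succ_mk]
  rcases Nat.eq_zero_or_pos n with hn | hn
  · subst hn
    simp [wt_zero]
  · have hwtn : wt ρ n = ρ^n/(n:ℝ)^2 := wt_of_pos ρ hn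
    calc ∑ k ∈ Finset.range (n+1), wt ρ (k, n-k).1 * wt ρ (k, n-k).2
        ≤ ∑ k ∈ Finset.range (n+1), (ρ^n/(n:ℝ)^2) * (2 * aa k + 2 * aa (n-k)) := by
          apply Finset.sum_le_sum
          intro k hk
          rw [Finset.mem_range] at hk
          simp only
          rcases Nat.eq_zero_or_pos k with h0 | h0
          · subst h0
            rw [wt_zero, zero_mul]
            have h1 := aa_nonneg 0
            have h2 := aa_nonneg n
            have h3 : (0:ℝ) ≤ ρ^n/(n:ℝ)^2 := by positivity
            simp only [Nat.sub_zero]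
            positivity
          rcases Nat.eq_or_lt_of_le (Nat.lt_succ_iff.mp hk) with hkn | hkn
          · subst hkn
            rw [Nat.sub_self, wt_zero, mul_zero]
            have h1 := aa_nonneg k
            have h2 := aa_nonneg 0
            have h3 : (0:ℝ) ≤ ρ^k/(k:ℝ)^2 := by positivity
            positivity
          · -- 1 ≤ k < n
            have hnk : 1 ≤ n - k := by omega
            set a : ℝ := (k:ℝ) with ha_def
            set b : ℝ := ((n-k:ℕ):ℝ) with hb_def
            have ha : (1:ℝ) ≤ a := by
              rw [ha_def]
              have h1 : (1:ℕ) ≤ k := h0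
              exact_mod_cast h1
            have hb : (1:ℝ) ≤ b := by
              rw [hb_def]
              exact_mod_cast hnk
            have hab : a + b = (n:ℝ) := by
              have h1 : k + (n - k) = n := by omega
              rw [ha_def, hb_def, ← Nat.cast_add, h1]
            have hkn' : k + (n-k) = n := by omega
            have hLHS : wt ρ k * wt ρ (n-k) = ρ^n/(a^2*b^2) := by
              rw [wt_of_pos ρ h0, wt_of_pos ρ hnk, div_mul_div_comm, ← pow_add, hkn']
            have haak : aa k = 1/a^2 := by rw [aa, if_neg (by omega)]
            have haank : aa (n-k) = 1/b^2 := by rw [aa, if_neg (by omega)]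
            rw [hLHS, haak, haank]
            have hsum : 2 * (1/a^2) + 2 * (1/b^2) = (2*b^2 + 2*a^2)/(a^2*b^2) := by
              field_simp
            rw [hsum, ← hab]
            rw [div_mul_div_comm]
            rw [div_le_div_iff₀ (by positivity) (by positivity)]
            have h2 : (a+b)^2 ≤ 2*a^2 + 2*b^2 := by nlinarith [sq_nonneg (a-b)]
            have hscaled : ρ^n * (a+b)^2 ≤ ρ^n * (2*a^2+2*b^2) :=
              mul_le_mul_of_nonneg_left h2 (by positivity)
            have hfin := mul_le_mul_of_nonneg_right hscaled
              (show (0:ℝ) ≤ a^2*b^2 by positivity)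
            nlinarith [hfin]
      _ = (ρ^n/(n:ℝ)^2) * (2 * (∑ k ∈ Finset.range (n+1), aa k)
            + 2 * (∑ k ∈ Finset.range (n+1), aa (n-k))) := by
          rw [← Finset.mul_sum]
          congr 1
          rw [Finset.sum_add_distrib, ← Finset.mul_sum, ← Finset.mul_sum]
      _ ≤ 8 * wt ρ n := by
          have hrefl : ∑ k ∈ Finset.range (n+1), aa (n-k)
              = ∑ k ∈ Finset.range (n+1), aa k := by
            have := Finset.sum_range_reflect (fun j => aa j) (n+1)
            simpa using this
          rw [hrefl, hwtn]
          have hs := aa_sum_le (n+1)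
          have hnn : (0:ℝ) ≤ ρ^n/(n:ℝ)^2 := by positivity
          nlinarith

lemma coeff_pow_wt {s : ℂ⟦X⟧} {M ρ : ℝ} (hρ : 0 < ρ) (hM : 0 ≤ M)
    (hb : ∀ j, ‖coeff j s‖ ≤ M * wt ρ j) :
    ∀ k, 1 ≤ k → ∀ i, ‖coeff i (s^k)‖ ≤ (8*M)^k * wt ρ i := by
  intro k
  induction k with
  | zero => omega
  | succ k ih =>
    intro _ i
    rcases Nat.eq_zero_or_pos k with hk0 | hk0
    · subst hk0
      rw [pow_one, pow_one]
      calc ‖coeff i s‖ ≤ M * wt ρ i := hb i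
        _ ≤ 8*M * wt ρ i := by nlinarith [wt_nonneg hρ i]
    · rw [pow_succ, PowerSeries.coeff_mul]
      calc ‖∑ p ∈ Finset.HasAntidiagonal.antidiagonal i, coeff p.1 (s^k) * coeff p.2 s‖
          ≤ ∑ p ∈ Finset.HasAntidiagonal.antidiagonal i, ‖coeff p.1 (s^k) * coeff p.2 s‖ :=
            norm_sum_le _ _
        _ ≤ ∑ p ∈ Finset.HasAntidiagonal.antidiagonal i, ((8*M)^k * wt ρ p.1) * (M * wt ρ p.2) := by
            apply Finset.sum_le_sum
            rintro ⟨p, q⟩ _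
            rw [norm_mul]
            apply mul_le_mul (ih hk0 p) (hb q) (norm_nonneg _)
            exact mul_nonneg (pow_nonneg (by linarith) k) (wt_nonneg hρ _)
        _ = ((8*M)^k * M) * ∑ p ∈ Finset.HasAntidiagonal.antidiagonal i, wt ρ p.1 * wt ρ p.2 := by
            rw [Finset.mul_sum]
            apply Finset.sum_congr rfl
            intro p _
            ring
        _ ≤ ((8*M)^k * M) * (8 * wt ρ i) := by
            apply mul_le_mul_of_nonneg_left (wt_conv hρ i) (by positivity)
        _ = (8*M)^(k+1) * wt ρ i := by ring

lemma coeff_pow_congr {u v : ℂ⟦X⟧} {n : ℕ}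
    (h : ∀ j, j ≤ n → coeff j u = coeff j v) :
    ∀ k, ∀ i, i ≤ n → coeff i (u^k) = coeff i (v^k) := by
  intro k
  induction k with
  | zero => intro i _; rfl
  | succ k ih =>
    intro i hi
    rw [pow_succ, pow_succ, PowerSeries.coeff_mul, PowerSeries.coeff_mul]
    apply Finset.sum_congr rfl
    rintro ⟨p, q⟩ hpq
    rw [Finset.HasAntidiagonal.mem_antidiagonal] at hpq
    rw [ih p (by omega), h q (by omega)]

lemma sq_le_four_pow (j : ℕ) : ((j:ℝ))^2 ≤ 4^j := by
  have h1 : j ≤ 2^j := Nat.le_of_lt ((Nat.lt_two_pow_self (n := j)))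
  have h2 : j^2 ≤ (2^j)^2 := Nat.pow_le_pow_left h1 2
  have h3 : (2^j)^2 = 4^j := by
    rw [← pow_mul, mul_comm, pow_mul]
    norm_num
  calc ((j:ℝ))^2 = ((j^2 : ℕ) : ℝ) := by push_cast; ring
    _ ≤ ((4^j : ℕ) : ℝ) := by exact_mod_cast h2.trans_eq h3
    _ = 4^j := by push_cast; ring

lemma geo_pscomp {F w : ℂ⟦X⟧} {Cf Rf Cw Rw : ℝ} (hw0 : constantCoeff w = 0)
    (hCf : 0 < Cf) (hRf : 0 < Rf) (hCw : 0 < Cw) (hRw : 0 < Rw)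
    (hF : ∀ k, ‖coeff k F‖ ≤ Cf * Rf^k) (hw : ∀ j, ‖coeff j w‖ ≤ Cw * Rw^j) :
    ∃ C R : ℝ, 0 < C ∧ 0 < R ∧ ∀ n, ‖coeff n (pscomp F w)‖ ≤ C * R^n := by
  have hM : (0:ℝ) < (16*Rf)⁻¹ := by positivity
  set M : ℝ := (16*Rf)⁻¹ with hMdef
  have hmax : (0:ℝ) < max 1 (Cw/M) := lt_of_lt_of_le one_pos (le_max_left _ _)
  set mv : ℝ := max 1 (Cw/M) with hmvdef
  set ρ : ℝ := 4*Rw*mv with hρdef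
  have hρ : 0 < ρ := by positivity
  have hMRf : 8*M*Rf = 1/2 := by
    rw [hMdef]; field_simp; ring
  have hb : ∀ j, ‖coeff j w‖ ≤ M * wt ρ j := by
    intro j
    rcases Nat.eq_zero_or_pos j with hj | hj
    · subst hj
      rw [wt_zero, mul_zero, coeff_zero_eq_constantCoeff_apply, hw0, norm_zero]
    · rw [wt_of_pos ρ hj, mul_div_assoc' M _ _, le_div_iff₀ (by positivity)]
      have e1 : ((j:ℝ))^2 ≤ 4^j := sq_le_four_pow j
      have e2 : mv ≤ mv^j := le_self_pow₀ (le_max_left _ _) (by omega)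
      have e3 : Cw ≤ M*mv := by
        have h4 : Cw/M ≤ mv := le_max_right _ _
        rw [div_le_iff₀ hM] at h4
        linarith [h4]
      have hρj : ρ^j = 4^j*Rw^j*mv^j := by
        rw [hρdef, mul_pow, mul_pow]
      calc ‖coeff j w‖ * (j:ℝ)^2 ≤ (Cw * Rw^j) * (j:ℝ)^2 := by
            apply mul_le_mul_of_nonneg_right (hw j) (by positivity)
        _ ≤ (Cw * Rw^j) * 4^j := by
            apply mul_le_mul_of_nonneg_left e1 (by positivity)
        _ ≤ ((M*mv) * Rw^j) * 4^j := by
            apply mul_le_mul_of_nonneg_right _ (by positivity)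
            apply mul_le_mul_of_nonneg_right e3 (by positivity)
        _ ≤ ((M*mv^j) * Rw^j) * 4^j := by
            apply mul_le_mul_of_nonneg_right _ (by positivity)
            apply mul_le_mul_of_nonneg_right _ (by positivity)
            apply mul_le_mul_of_nonneg_left e2 (le_of_lt hM)
        _ = M * ρ^j := by rw [hρj]; ring
  refine ⟨Cf, max ρ 1, hCf, lt_of_lt_of_le one_pos (le_max_right _ _), ?_⟩
  intro n
  rcases Nat.eq_zero_or_pos n with hn | hn
  · subst hn
    rw [pscomp, coeff_mk]
    have he : ∑ k ∈ Finset.range (0+1), coeff k F * coeff 0 (w^k) = coeff 0 F := by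
      rw [Finset.sum_range_one, pow_zero, PowerSeries.coeff_one, if_pos rfl, mul_one]
    rw [he, pow_zero, mul_one]
    have h0 := hF 0
    rw [pow_zero, mul_one] at h0
    exact h0
  · rw [pscomp, coeff_mk]
    have hsplit : ∑ k ∈ Finset.range (n+1), coeff k F * coeff n (w^k)
        = (∑ k ∈ Finset.range n, coeff (k+1) F * coeff n (w^(k+1)))
          + coeff 0 F * coeff n (w^0) := Finset.sum_range_succ' _ n
    rw [hsplit, pow_zero, PowerSeries.coeff_one, if_neg (by omega), mul_zero, add_zero]
    calc ‖∑ k ∈ Finset.range n, coeff (k+1) F * coeff n (w^(k+1))‖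
        ≤ ∑ k ∈ Finset.range n, ‖coeff (k+1) F * coeff n (w^(k+1))‖ := norm_sum_le _ _
      _ ≤ ∑ k ∈ Finset.range n, (Cf * Rf^(k+1)) * ((8*M)^(k+1) * wt ρ n) := by
          apply Finset.sum_le_sum
          intro k _
          rw [norm_mul]
          apply mul_le_mul (hF (k+1)) (coeff_pow_wt hρ (le_of_lt hM) hb (k+1) (by omega) n)
            (norm_nonneg _) (by positivity)
      _ = Cf * wt ρ n * ∑ k ∈ Finset.range n, ((1:ℝ)/2)^(k+1) := by
          rw [Finset.mul_sum]
          apply Finset.sum_congr rfl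
          intro k _
          have : Rf^(k+1) * (8*M)^(k+1) = (1/2:ℝ)^(k+1) := by
            rw [← mul_pow]
            congr 1
            rw [← hMRf]; ring
          calc (Cf * Rf^(k+1)) * ((8*M)^(k+1) * wt ρ n)
              = Cf * wt ρ n * (Rf^(k+1) * (8*M)^(k+1)) := by ring
            _ = Cf * wt ρ n * ((1/2:ℝ))^(k+1) := by rw [this]
            _ = Cf * wt ρ n * ((1:ℝ)/2)^(k+1) := by norm_num
      _ ≤ Cf * wt ρ n * ((1/2:ℝ) * (1-1/2)⁻¹) := by
          apply mul_le_mul_of_nonneg_left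
            (Aux4x.geom_partial_shift_le (by norm_num) (by norm_num) _)
            (mul_nonneg (le_of_lt hCf) (wt_nonneg hρ n))
      _ ≤ Cf * (max ρ 1)^n := by
          norm_num
          calc Cf * wt ρ n ≤ Cf * ρ^n := by
                apply mul_le_mul_of_nonneg_left (wt_le_pow hρ n) (le_of_lt hCf)
            _ ≤ Cf * (max ρ 1)^n := by
                apply mul_le_mul_of_nonneg_left _ (le_of_lt hCf)
                apply pow_le_pow_left₀ (le_of_lt hρ) (le_max_left _ _)

lemma main_bound {s K : ℂ⟦X⟧} {ζ : ℂ} {Ck Rk : ℝ} (hCk : 0 < Ck) (hRk : 0 < Rk)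
    (hs0 : constantCoeff s = 0) (hrel : s = ζ • (X * pscomp K s))
    (hK : ∀ k, ‖coeff k K‖ ≤ Ck * Rk^k) :
    ∃ C R : ℝ, 0 < C ∧ 0 < R ∧ ∀ n, ‖coeff n s‖ ≤ C * R^n := by
  have hM : (0:ℝ) < (16*Rk)⁻¹ := by positivity
  set M : ℝ := (16*Rk)⁻¹ with hMdef
  set ρ : ℝ := 1 + 4*‖ζ‖*Ck/M + ‖coeff 1 s‖/M with hρdef
  have hρ1 : (1:ℝ) ≤ ρ := by
    rw [hρdef]
    have h1 : (0:ℝ) ≤ 4*‖ζ‖*Ck/M := by positivity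
    have h2 : (0:ℝ) ≤ ‖coeff 1 s‖/M := by positivity
    linarith
  have hρ : (0:ℝ) < ρ := lt_of_lt_of_le one_pos hρ1
  have hMRk : 8*M*Rk = 1/2 := by rw [hMdef]; field_simp; ring
  have key : ∀ m, ‖coeff m s‖ ≤ M * wt ρ m := by
    intro m
    induction m using Nat.strong_induction_on with
    | _ m ih =>
      match m with
      | 0 =>
        rw [wt_zero, mul_zero, coeff_zero_eq_constantCoeff_apply, hs0, norm_zero]
      | 1 =>
        rw [wt_of_pos ρ (le_refl 1)]
        have : ρ^1/((1:ℕ):ℝ)^2 = ρ := by norm_num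
        rw [this]
        have hc : ‖coeff 1 s‖/M ≤ ρ := by
          rw [hρdef]
          have h1 : (0:ℝ) ≤ 4*‖ζ‖*Ck/M := by positivity
          linarith
        rw [div_le_iff₀ hM] at hc
        linarith [hc]
      | (m+2) =>
        -- the truncated series P
        set P : ℂ⟦X⟧ := ((trunc (m+2) s : Polynomial ℂ) : ℂ⟦X⟧) with hPdef
        have hPcoeff : ∀ j, coeff j P = if j < m+2 then coeff j s else 0 := by
          intro j
          rw [hPdef, Polynomial.coeff_coe, coeff_trunc]
        have hbP : ∀ j, ‖coeff j P‖ ≤ M * wt ρ j := by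
          intro j
          rw [hPcoeff j]
          split_ifs with hj
          · exact ih j hj
          · rw [norm_zero]
            exact mul_nonneg (le_of_lt hM) (wt_nonneg hρ j)
        have hagree : ∀ j, j ≤ m+1 → coeff j s = coeff j P := by
          intro j hj
          rw [hPcoeff j, if_pos (by omega)]
        -- the relation coefficient
        have hcm : coeff (m+2) s = ζ * coeff (m+1) (pscomp K s) := by
          conv_lhs => rw [hrel]
          rw [map_smul, smul_eq_mul]
          congr 1
          exact coeff_succ_X_mul (m+1) (pscomp K s)
        rw [hcm, norm_mul]
        have hps : coeff (m+1) (pscomp K s)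
            = ∑ k ∈ Finset.range (m+2), coeff k K * coeff (m+1) (s^k) := by
          rw [pscomp, coeff_mk]
        have hrepl : ∀ k, coeff (m+1) (s^k) = coeff (m+1) (P^k) := by
          intro k
          exact coeff_pow_congr hagree k (m+1) (le_refl _)
        rw [hps]
        have hbound : ‖∑ k ∈ Finset.range (m+2), coeff k K * coeff (m+1) (s^k)‖
            ≤ Ck * wt ρ (m+1) := by
          have hsplit : ∑ k ∈ Finset.range (m+2), coeff k K * coeff (m+1) (s^k)
              = (∑ k ∈ Finset.range (m+1), coeff (k+1) K * coeff (m+1) (s^(k+1)))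
                + coeff 0 K * coeff (m+1) (s^0) := Finset.sum_range_succ' _ (m+1)
          rw [hsplit, pow_zero, PowerSeries.coeff_one, if_neg (by omega), mul_zero, add_zero]
          calc ‖∑ k ∈ Finset.range (m+1), coeff (k+1) K * coeff (m+1) (s^(k+1))‖
              ≤ ∑ k ∈ Finset.range (m+1), ‖coeff (k+1) K * coeff (m+1) (s^(k+1))‖ :=
                norm_sum_le _ _
            _ ≤ ∑ k ∈ Finset.range (m+1), (Ck * Rk^(k+1)) * ((8*M)^(k+1) * wt ρ (m+1)) := by
                apply Finset.sum_le_sum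
                intro k _
                rw [norm_mul, hrepl (k+1)]
                apply mul_le_mul (hK (k+1))
                  (coeff_pow_wt hρ (le_of_lt hM) hbP (k+1) (by omega) (m+1))
                  (norm_nonneg _) (by positivity)
            _ = Ck * wt ρ (m+1) * ∑ k ∈ Finset.range (m+1), ((1:ℝ)/2)^(k+1) := by
                rw [Finset.mul_sum]
                apply Finset.sum_congr rfl
                intro k _
                have he : Rk^(k+1) * (8*M)^(k+1) = ((1:ℝ)/2)^(k+1) := by
                  rw [← mul_pow]
                  congr 1
                  rw [← hMRk]; ring
                calc (Ck * Rk^(k+1)) * ((8*M)^(k+1) * wt ρ (m+1))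
                    = Ck * wt ρ (m+1) * (Rk^(k+1) * (8*M)^(k+1)) := by ring
                  _ = Ck * wt ρ (m+1) * ((1:ℝ)/2)^(k+1) := by rw [he]
            _ ≤ Ck * wt ρ (m+1) * ((1/2:ℝ) * (1-1/2)⁻¹) := by
                apply mul_le_mul_of_nonneg_left
                  (Aux4x.geom_partial_shift_le (by norm_num) (by norm_num) _)
                  (mul_nonneg (le_of_lt hCk) (wt_nonneg hρ (m+1)))
            _ ≤ Ck * wt ρ (m+1) := by
                norm_num
        calc ‖ζ‖ * ‖∑ k ∈ Finset.range (m+2), coeff k K * coeff (m+1) (s^k)‖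
            ≤ ‖ζ‖ * (Ck * wt ρ (m+1)) := by
              apply mul_le_mul_of_nonneg_left hbound (norm_nonneg _)
          _ ≤ M * wt ρ (m+2) := by
              rw [wt_of_pos ρ (by omega), wt_of_pos ρ (by omega)]
              have hm1 : ((m+1:ℕ):ℝ) = (m:ℝ)+1 := by push_cast; ring
              have hm2 : ((m+2:ℕ):ℝ) = (m:ℝ)+2 := by push_cast; ring
              rw [hm1, hm2]
              have hmge : (0:ℝ) ≤ (m:ℝ) := Nat.cast_nonneg m
              have hρbound : 4*‖ζ‖*Ck ≤ M*ρ := by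
                have h1 : 4*‖ζ‖*Ck/M ≤ ρ := by
                  rw [hρdef]
                  have h2 : (0:ℝ) ≤ ‖coeff 1 s‖/M := by positivity
                  linarith
                rw [div_le_iff₀ hM] at h1
                linarith
              have hmsq : ((m:ℝ)+2)^2 ≤ 4*((m:ℝ)+1)^2 := by nlinarith
              have hconv1 : ‖ζ‖ * (Ck * (ρ^(m+1)/((m:ℝ)+1)^2))
                  = (‖ζ‖*Ck*ρ^(m+1))/(((m:ℝ)+1)^2) := by ring
              have hconv2 : M * (ρ^(m+2)/((m:ℝ)+2)^2)
                  = (M*ρ^(m+2))/(((m:ℝ)+2)^2) := by ring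
              rw [hconv1, hconv2, div_le_div_iff₀ (by positivity) (by positivity)]
              calc ‖ζ‖*Ck*ρ^(m+1) * ((m:ℝ)+2)^2
                  ≤ ‖ζ‖*Ck*ρ^(m+1) * (4*((m:ℝ)+1)^2) := by
                    apply mul_le_mul_of_nonneg_left hmsq (by positivity)
                _ = (4*‖ζ‖*Ck) * (ρ^(m+1)*((m:ℝ)+1)^2) := by ring
                _ ≤ (M*ρ) * (ρ^(m+1)*((m:ℝ)+1)^2) := by
                    apply mul_le_mul_of_nonneg_right hρbound (by positivity)
                _ = M*ρ^(m+2) * (((m:ℝ)+1)^2) := by rw [pow_succ]; ring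
  refine ⟨M, ρ, hM, hρ, ?_⟩
  intro n
  calc ‖coeff n s‖ ≤ M * wt ρ n := key n
    _ ≤ M * ρ^n := mul_le_mul_of_nonneg_left (wt_le_pow hρ n) (le_of_lt hM)

end Aux5

namespace Aux6

lemma pscomp_deriv {F s : ℂ⟦X⟧} (hs : constantCoeff s = 0) :
    derivativeFun (pscomp F s) = pscomp (derivativeFun F) s * derivativeFun s := by
  ext n
  have h1 : coeff (n+1) (pscomp F s)
      = coeff (n+1) (Polynomial.aeval s (trunc (n+2) F)) :=
    Aux.coeff_pscomp_aeval hs (le_refl (n+1))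
  have h2 : derivativeFun (Polynomial.aeval s (trunc (n+2) F))
      = Polynomial.aeval s (Polynomial.derivative (trunc (n+2) F)) * derivativeFun s :=
    Aux2.derivativeFun_aeval _ s
  have h3 : Polynomial.derivative (trunc (n+2) F) = trunc (n+1) (derivativeFun F) :=
    (trunc_derivativeFun F (n+1)).symm
  have h4 : coeff n (Polynomial.aeval s (trunc (n+1) (derivativeFun F)) * derivativeFun s)
      = coeff n (pscomp (derivativeFun F) s * derivativeFun s) :=
    Aux.coeff_mul_congr (fun j hj => (Aux.coeff_pscomp_aeval hs hj).symm) (fun _ _ => rfl)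
  rw [coeff_derivativeFun', h1, ← coeff_derivativeFun', h2, h3, h4]

lemma coeff_diag_pow {y : ℂ⟦X⟧} (h0 : coeff 0 y = 0) :
    ∀ k, coeff k (y^k) = (coeff 1 y)^k := by
  intro k
  induction k with
  | zero => simp
  | succ k ih =>
    rw [pow_succ, PowerSeries.coeff_mul]
    rw [Finset.sum_eq_single (k, 1)]
    · rw [ih, pow_succ]
    · rintro ⟨p, q⟩ hpq hne
      rw [Finset.HasAntidiagonal.mem_antidiagonal] at hpq
      simp only [Prod.fst, Prod.snd] at hpq ⊢
      rcases lt_or_ge p k with hp | hp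
      · rw [Aux.coeff_pow_eq_zero (by rwa [← coeff_zero_eq_constantCoeff_apply]) k p hp,
          zero_mul]
      · have hq : q = 0 := by
          rcases Nat.eq_or_lt_of_le hp with h | h
          · exfalso
            apply hne
            rw [Prod.mk.injEq]
            omega
          · omega
        rw [hq, h0, mul_zero]
    · intro hmem
      exfalso
      apply hmem
      rw [Finset.HasAntidiagonal.mem_antidiagonal]

lemma coeff_shift_pow {y : ℂ⟦X⟧} (h0 : coeff 0 y = 0) {j : ℕ} (hj : 2 ≤ j)
    (hmid : ∀ q, 2 ≤ q → q < j → coeff q y = 0) :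
    ∀ t, coeff (t+j) (y^(t+1)) = ((t:ℂ)+1) * (coeff 1 y)^t * coeff j y := by
  intro t
  induction t with
  | zero => simp
  | succ t ih =>
    rw [pow_succ, PowerSeries.coeff_mul, Finset.Nat.sum_antidiagonal_eq_sum_range_succ_mk]
    have keyfun : ∀ k ∈ Finset.range (t+1+j+1),
        coeff (k, t+1+j-k).1 (y^(t+1)) * coeff (k, t+1+j-k).2 y
        = (if k = t+j then ((t:ℂ)+1) * (coeff 1 y)^t * coeff j y * coeff 1 y else 0)
          + (if k = t+1 then (coeff 1 y)^(t+1) * coeff j y else 0) := by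
      intro k hk
      rw [Finset.mem_range] at hk
      simp only [Prod.fst, Prod.snd]
      rcases lt_or_ge k (t+1) with hklt | hkge
      · rw [Aux.coeff_pow_eq_zero (by rwa [← coeff_zero_eq_constantCoeff_apply]) (t+1) k hklt,
          zero_mul, if_neg (by omega), if_neg (by omega), add_zero]
      · have hqle : t+1+j-k ≤ j := by omega
        rcases Nat.eq_or_lt_of_le hqle with hqj | hqlt
        · have hk1 : k = t+1 := by omega
          rw [if_neg (by omega), if_pos hk1, zero_add, hqj, hk1, coeff_diag_pow h0 (t+1)]
        · rcases Nat.lt_or_ge (t+1+j-k) 2 with hqsm | hqbig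
          · rcases Nat.eq_zero_or_pos (t+1+j-k) with hq0 | hq1
            · rw [hq0, h0, mul_zero, if_neg (by omega), if_neg (by omega), add_zero]
            · have hq1' : t+1+j-k = 1 := by omega
              have hkj : k = t+j := by omega
              rw [hq1', if_pos hkj, if_neg (by omega), add_zero, hkj, ih]
          · rw [hmid (t+1+j-k) hqbig hqlt, mul_zero, if_neg (by omega),
              if_neg (by omega), add_zero]
    rw [Finset.sum_congr rfl keyfun, Finset.sum_add_distrib,
      Finset.sum_ite_eq' (Finset.range (t+1+j+1)) (t+j),
      Finset.sum_ite_eq' (Finset.range (t+1+j+1)) (t+1),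
      if_pos (by rw [Finset.mem_range]; omega), if_pos (by rw [Finset.mem_range]; omega)]
    push_cast
    ring
lemma eq_linear_of_pow_eq {y : ℂ⟦X⟧} {ν : ℕ} (hν : 1 ≤ ν)
    (h0 : constantCoeff y = 0) (hy : y ^ ν = X ^ ν) :
    y = (coeff 1 y) • X := by
  have h0' : coeff 0 y = 0 := by rwa [coeff_zero_eq_constantCoeff_apply]
  have hζ : (coeff 1 y)^ν = 1 := by
    have h1 := coeff_diag_pow h0' ν
    rw [hy, PowerSeries.coeff_X_pow, if_pos rfl] at h1
    exact h1.symm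
  have hζne : coeff 1 y ≠ 0 := by
    intro hc
    rw [hc, zero_pow (by omega)] at hζ
    exact one_ne_zero hζ.symm
  have main : ∀ j, 2 ≤ j → coeff j y = 0 := by
    intro j
    induction j using Nat.strong_induction_on with
    | _ j ih =>
      intro hj2
      obtain ⟨t, rfl⟩ : ∃ t, ν = t+1 := ⟨ν-1, by omega⟩
      have hkey := coeff_shift_pow h0' hj2 (fun q hq2 hqj => ih q hqj hq2) t
      rw [hy, PowerSeries.coeff_X_pow, if_neg (by omega)] at hkey
      have hν : ((t:ℂ)+1) ≠ 0 := Nat.cast_add_one_ne_zero t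
      have := hkey.symm
      rcases mul_eq_zero.1 this with h | h
      · rcases mul_eq_zero.1 h with h' | h'
        · exact absurd h' hν
        · exact absurd h' (pow_ne_zero t hζne)
      · exact h
  ext n
  match n with
  | 0 =>
    rw [h0', map_smul, smul_eq_mul, PowerSeries.coeff_zero_X, mul_zero]
  | 1 =>
    rw [map_smul, smul_eq_mul, PowerSeries.coeff_one_X, mul_one]
  | (n+2) =>
    rw [main (n+2) (by omega), map_smul, smul_eq_mul, PowerSeries.coeff_X,
      if_neg (by omega), mul_zero]

end Aux6

/-- If `A` and `B` are convergent power series with `ord A = ν - 1` and `B(0) ≠ 0`,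
then every order-one formal power series solution `s` of
`A(s(t)) s'(t) = t^{ν-1} B(s(t))` is convergent. -/
theorem assoc_equation_solutions_convergent
    (ν : ℕ) (hν : 1 ≤ ν) (A B : PowerSeries ℂ)
    (hA : A.order = ((ν - 1 : ℕ)))
    (hB : PowerSeries.constantCoeff B ≠ 0)
    (hAconv : ∃ r : ℝ, 0 < r ∧ Summable fun i : ℕ => ‖PowerSeries.coeff i A‖ * r ^ i)
    (hBconv : ∃ r : ℝ, 0 < r ∧ Summable fun i : ℕ => ‖PowerSeries.coeff i B‖ * r ^ i) :
    ∀ s : PowerSeries ℂ, s.order = 1 →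
      pscomp A s * s.derivativeFun = PowerSeries.X ^ (ν - 1) * pscomp B s →
      ∃ r : ℝ, 0 < r ∧ Summable fun i : ℕ => ‖PowerSeries.coeff i s‖ * r ^ i := by
  obtain ⟨ra, hra, hAsum⟩ := hAconv
  obtain ⟨rb, hrb, hBsum⟩ := hBconv
  obtain ⟨Ca, Ra, hCa, hRa, hgA⟩ := Aux4.geo_of_summable hra hAsum
  obtain ⟨Cb, Rb, hCb, hRb, hgB⟩ := Aux4.geo_of_summable hrb hBsum
  intro s hord heq
  have hνC : ((ν:ℂ)) ≠ 0 := Nat.cast_ne_zero.2 (by omega)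
  have hs0 : constantCoeff s = 0 := by
    have h := PowerSeries.coeff_of_lt_order (φ := s) 0 (by rw [hord]; exact_mod_cast zero_lt_one)
    rwa [coeff_zero_eq_constantCoeff_apply] at h
  -- facts about A
  have hAlow : ∀ i, i < ν-1 → coeff i A = 0 := fun i hi =>
    PowerSeries.coeff_of_lt_order i (by rw [hA]; exact_mod_cast hi)
  have hAtop : coeff (ν-1) A ≠ 0 := (PowerSeries.order_eq_nat.mp hA).1
  -- the series C = A * B⁻¹
  have hBB : B * B⁻¹ = 1 := PowerSeries.mul_inv_cancel B hB
  obtain ⟨Cb', Rb', hCb', hRb', hgBi⟩ := Aux4.geo_inv hCb hRb hgB hB hBB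
  have hgC : ∀ n, ‖coeff n (A * B⁻¹)‖ ≤ (Ca*Cb') * (2*max Ra Rb')^n :=
    Aux4.geo_mul hCa hRa hCb' hRb' hgA hgBi
  set Cc : ℝ := Ca*Cb' with hCcdef
  set Rc : ℝ := 2*max Ra Rb' with hRcdef
  have hCcpos : 0 < Cc := by positivity
  have hRcpos : 0 < Rc := by
    rw [hRcdef]
    have : (0:ℝ) < max Ra Rb' := lt_of_lt_of_le hRa (le_max_left _ _)
    linarith
  have hClow : ∀ i, i < ν-1 → coeff i (A * B⁻¹) = 0 := by
    intro i hi
    rw [PowerSeries.coeff_mul]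
    apply Finset.sum_eq_zero
    rintro ⟨p, q⟩ hpq
    rw [Finset.HasAntidiagonal.mem_antidiagonal] at hpq
    simp only [Prod.fst, Prod.snd]
    rw [hAlow p (by omega), zero_mul]
  have hCtop : coeff (ν-1) (A * B⁻¹) ≠ 0 := by
    rw [PowerSeries.coeff_mul, Finset.Nat.sum_antidiagonal_eq_sum_range_succ_mk]
    rw [Finset.sum_eq_single (ν-1)]
    · simp only [Prod.fst, Prod.snd]
      rw [Nat.sub_self, coeff_zero_eq_constantCoeff_apply, PowerSeries.constantCoeff_inv]
      exact mul_ne_zero hAtop (inv_ne_zero hB)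
    · intro k hk hne
      rw [Finset.mem_range] at hk
      simp only [Prod.fst, Prod.snd]
      rw [hAlow k (by omega), zero_mul]
    · intro hmem
      exfalso
      apply hmem
      rw [Finset.mem_range]
      omega
  -- reduce the equation to  pscomp C s * s' = X^(ν-1)
  have hpsB_ne : pscomp B s ≠ 0 := by
    intro hzero
    have h := Aux.constantCoeff_pscomp B s
    rw [hzero, map_zero] at h
    rw [pow_zero, mul_one, coeff_zero_eq_constantCoeff_apply] at h
    exact hB h.symm
  have hA_eq : pscomp A s = pscomp (A * B⁻¹) s * pscomp B s := by
    rw [← Aux.pscomp_mul hs0, mul_assoc, PowerSeries.inv_mul_cancel B hB, mul_one]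
  have heq2 : (pscomp (A * B⁻¹) s * derivativeFun s) * pscomp B s
      = (X^(ν-1)) * pscomp B s := by
    calc (pscomp (A * B⁻¹) s * derivativeFun s) * pscomp B s
        = (pscomp (A * B⁻¹) s * pscomp B s) * derivativeFun s := by ring
      _ = pscomp A s * derivativeFun s := by rw [← hA_eq]
      _ = X^(ν-1) * pscomp B s := heq
  have hkey : pscomp (A * B⁻¹) s * derivativeFun s = X^(ν-1) :=
    mul_right_cancel₀ hpsB_ne heq2
  -- the antiderivative Φ
  set Φ : ℂ⟦X⟧ := PowerSeries.mk
    (fun k => if k = 0 then 0 else coeff (k-1) (A * B⁻¹) / k) with hΦdef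
  have hΦd : derivativeFun Φ = A * B⁻¹ := by
    ext n
    rw [coeff_derivativeFun', hΦdef, coeff_mk, if_neg (Nat.succ_ne_zero n)]
    simp only [Nat.add_sub_cancel]
    have hne : ((n:ℂ)+1) ≠ 0 := Nat.cast_add_one_ne_zero n
    push_cast
    rw [div_mul_cancel₀ _ hne]
  have hΦ0 : coeff 0 Φ = 0 := by rw [hΦdef, coeff_mk, if_pos rfl]
  have hΦlow : ∀ k, k < ν → coeff k Φ = 0 := by
    intro k hk
    rw [hΦdef, coeff_mk]
    split_ifs with h
    · rfl
    · rw [hClow (k-1) (by omega), zero_div]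
  have hΦν : coeff ν Φ = coeff (ν-1) (A * B⁻¹) / ν := by
    rw [hΦdef, coeff_mk, if_neg (by omega)]
  -- integrate the equation
  have hchain : derivativeFun (pscomp Φ s) = X^(ν-1) := by
    rw [Aux6.pscomp_deriv hs0, hΦd, hkey]
  set Ψ : ℂ⟦X⟧ := PowerSeries.mk (fun k => if k = ν then ((ν:ℂ))⁻¹ else 0) with hΨdef
  have hΨd : derivativeFun Ψ = X^(ν-1) := by
    ext n
    rw [coeff_derivativeFun', hΨdef, coeff_mk, PowerSeries.coeff_X_pow]
    by_cases h : n+1 = ν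
    · rw [if_pos h, if_pos (by omega)]
      have hcast : ((n:ℂ)+1) = (ν:ℂ) := by exact_mod_cast congrArg (Nat.cast (R := ℂ)) h
      rw [hcast, inv_mul_cancel₀ hνC]
    · rw [if_neg h, if_neg (by omega), zero_mul]
  have hint : pscomp Φ s = Ψ := by
    apply Aux3.ext_of_deriv (by rw [hchain, hΨd])
    rw [← coeff_zero_eq_constantCoeff_apply, ← coeff_zero_eq_constantCoeff_apply]
    have h1 : coeff 0 (pscomp Φ s) = coeff 0 Φ * constantCoeff s ^ 0 := by
      rw [coeff_zero_eq_constantCoeff_apply]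
      exact Aux.constantCoeff_pscomp Φ s
    rw [h1, hΦ0, zero_mul, hΨdef, coeff_mk, if_neg (by omega)]
  -- the series G with X^ν * G = ν • Φ
  set G : ℂ⟦X⟧ := PowerSeries.mk (fun k => (ν:ℂ) * coeff (k+ν) Φ) with hGdef
  have hXG : X^ν * G = (ν:ℂ) • Φ := by
    ext n
    rw [PowerSeries.coeff_X_pow_mul', map_smul, smul_eq_mul]
    split_ifs with h
    · rw [hGdef, coeff_mk, show n-ν+ν = n by omega]
    · rw [hΦlow n (by omega), mul_zero]
  have hG0 : constantCoeff G = coeff (ν-1) (A * B⁻¹) := by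
    rw [hGdef, constantCoeff_mk, zero_add, hΦν, mul_div_cancel₀ _ hνC]
  have hG0ne : constantCoeff G ≠ 0 := by rw [hG0]; exact hCtop
  -- the key algebraic relation s^ν * pscomp G s = X^ν
  have hνΨ : (ν:ℂ) • Ψ = X^ν := by
    ext n
    rw [map_smul, smul_eq_mul, hΨdef, coeff_mk, PowerSeries.coeff_X_pow]
    split_ifs with h
    · rw [mul_inv_cancel₀ hνC]
    · rw [mul_zero]
  have hstar : s^ν * pscomp G s = X^ν := by
    have h1 : pscomp (X^ν * G) s = (pscomp X s)^ν * pscomp G s := by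
      rw [Aux.pscomp_mul hs0, Aux.pscomp_pow hs0]
    rw [hXG, Aux.pscomp_smul, hint, hνΨ, Aux.pscomp_X hs0] at h1
    exact h1.symm
  -- convergence of Φ, G, W
  have hgΦ : ∀ k, ‖coeff k Φ‖ ≤ (Cc/Rc) * Rc^k := by
    intro k
    match k with
    | 0 =>
      rw [hΦ0, norm_zero, pow_zero, mul_one]
      positivity
    | (k+1) =>
      rw [hΦdef, coeff_mk, if_neg (Nat.succ_ne_zero k)]
      simp only [Nat.add_sub_cancel]
      rw [norm_div]
      have h1 : (1:ℝ) ≤ ‖((k+1:ℕ):ℂ)‖ := by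
        rw [Complex.norm_natCast]
        exact_mod_cast Nat.one_le_iff_ne_zero.2 (Nat.succ_ne_zero k)
      calc ‖coeff k (A * B⁻¹)‖ / ‖((k+1:ℕ):ℂ)‖ ≤ ‖coeff k (A * B⁻¹)‖ := by
            apply div_le_self (norm_nonneg _) h1
        _ ≤ Cc * Rc^k := hgC k
        _ = (Cc/Rc) * Rc^(k+1) := by
            field_simp
            ring
  have hgG : ∀ k, ‖coeff k G‖ ≤ ((ν:ℝ)*(Cc/Rc)*Rc^ν) * Rc^k := by
    intro k
    rw [hGdef, coeff_mk, norm_mul, Complex.norm_natCast]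
    calc (ν:ℝ) * ‖coeff (k+ν) Φ‖ ≤ (ν:ℝ) * ((Cc/Rc) * Rc^(k+ν)) := by
          apply mul_le_mul_of_nonneg_left (hgΦ (k+ν)) (Nat.cast_nonneg ν)
      _ = ((ν:ℝ)*(Cc/Rc)*Rc^ν) * Rc^k := by rw [pow_add]; ring
  set g0 : ℂ := constantCoeff G with hg0def
  set W : ℂ⟦X⟧ := g0⁻¹ • G - 1 with hWdef
  have hW0 : constantCoeff W = 0 := by
    rw [← coeff_zero_eq_constantCoeff_apply, hWdef, map_sub, map_smul, smul_eq_mul,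
      PowerSeries.coeff_one, if_pos rfl, coeff_zero_eq_constantCoeff_apply,
      inv_mul_cancel₀ hG0ne, sub_self]
  set CG : ℝ := (ν:ℝ)*(Cc/Rc)*Rc^ν with hCGdef
  have hCGpos : 0 < CG := by
    rw [hCGdef]
    have : (0:ℝ) < (ν:ℝ) := by exact_mod_cast (by omega : 0 < ν)
    positivity
  set CW : ℝ := ‖g0⁻¹‖*CG + 1 with hCWdef
  have hCWpos : 0 < CW := by positivity
  have hgW : ∀ k, ‖coeff k W‖ ≤ CW * Rc^k := by
    intro k
    match k with
    | 0 =>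
      rw [coeff_zero_eq_constantCoeff_apply, hW0, norm_zero, pow_zero, mul_one]
      positivity
    | (k+1) =>
      rw [hWdef, map_sub, map_smul, smul_eq_mul, PowerSeries.coeff_one,
        if_neg (Nat.succ_ne_zero k), sub_zero, norm_mul]
      calc ‖g0⁻¹‖ * ‖coeff (k+1) G‖ ≤ ‖g0⁻¹‖ * (CG * Rc^(k+1)) := by
            apply mul_le_mul_of_nonneg_left (hgG (k+1)) (norm_nonneg _)
        _ ≤ CW * Rc^(k+1) := by
            rw [hCWdef]
            have h2 : (0:ℝ) ≤ Rc^(k+1) := by positivity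
            nlinarith [norm_nonneg (g0⁻¹), hCGpos]
  -- the root H with H^ν = G
  obtain ⟨η, hη⟩ := IsAlgClosed.exists_pow_nat_eq g0 (by omega : 0 < ν)
  have hηne : η ≠ 0 := by
    intro hc
    rw [hc, zero_pow (by omega)] at hη
    exact hG0ne hη.symm
  set bb : ℂ⟦X⟧ := Aux3.binS ((ν:ℂ)⁻¹) with hbbdef
  set H : ℂ⟦X⟧ := η • pscomp bb W with hHdef
  have hHν : H^ν = G := by
    rw [hHdef, smul_pow, ← Aux.pscomp_pow hW0, Aux3.binS_root ν hν]
    have h2 : pscomp (1 + X) W = 1 + W := by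
      rw [Aux.pscomp_add, Aux.pscomp_one, Aux.pscomp_X hW0]
    rw [h2, hη]
    have h3 : (1 : ℂ⟦X⟧) + W = g0⁻¹ • G := by
      rw [hWdef]; ring
    rw [h3, smul_smul, mul_inv_cancel₀ hG0ne, one_smul]
  have hH0 : constantCoeff H = η := by
    rw [← coeff_zero_eq_constantCoeff_apply, hHdef, map_smul, smul_eq_mul]
    have h1 : coeff 0 (pscomp bb W) = 1 := by
      rw [coeff_zero_eq_constantCoeff_apply, Aux.constantCoeff_pscomp bb W]
      have h2 : coeff 0 bb = 1 := by
        rw [hbbdef, coeff_zero_eq_constantCoeff_apply, Aux3.binS_c0]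
      rw [h2, pow_zero, one_mul]
    rw [h1, mul_one]
  have hgbb : ∀ k, ‖coeff k bb‖ ≤ 1 * 1^k := by
    intro k
    rw [one_pow, one_mul, hbbdef]
    exact Aux3.binS_coeff_norm_le ν hν k
  obtain ⟨CH0, RH0, hCH0, hRH0, hgH0⟩ :=
    Aux5.geo_pscomp hW0 one_pos one_pos hCWpos hRcpos hgbb hgW
  have hgH : ∀ k, ‖coeff k H‖ ≤ ((‖η‖+1)*CH0) * RH0^k := by
    intro k
    rw [hHdef, map_smul, smul_eq_mul, norm_mul]
    calc ‖η‖ * ‖coeff k (pscomp bb W)‖ ≤ ‖η‖ * (CH0 * RH0^k) := by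
          apply mul_le_mul_of_nonneg_left (hgH0 k) (norm_nonneg _)
      _ ≤ ((‖η‖+1)*CH0) * RH0^k := by
          have h2 : (0:ℝ) ≤ RH0^k := by positivity
          nlinarith [norm_nonneg η, hCH0]
  -- K = H⁻¹
  have hH0ne : constantCoeff H ≠ 0 := by rw [hH0]; exact hηne
  have hHK : H * H⁻¹ = 1 := PowerSeries.mul_inv_cancel H hH0ne
  obtain ⟨CK, RK, hCK, hRK, hgK⟩ :=
    Aux4.geo_inv (by positivity : (0:ℝ) < (‖η‖+1)*CH0) hRH0 hgH hH0ne hHK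
  -- the linear relation
  set y : ℂ⟦X⟧ := s * pscomp H s with hydef
  have hy0 : constantCoeff y = 0 := by rw [hydef, map_mul, hs0, zero_mul]
  have hyν : y^ν = X^ν := by
    rw [hydef, mul_pow, ← Aux.pscomp_pow hs0, hHν, hstar]
  have hylin : y = (coeff 1 y) • X := Aux6.eq_linear_of_pow_eq hν hy0 hyν
  have hrel : s = (coeff 1 y) • (X * pscomp H⁻¹ s) := by
    have h1 : pscomp H s * pscomp H⁻¹ s = 1 := by
      rw [← Aux.pscomp_mul hs0, hHK, Aux.pscomp_one]
    calc s = s * (pscomp H s * pscomp H⁻¹ s) := by rw [h1, mul_one]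
      _ = y * pscomp H⁻¹ s := by rw [hydef]; ring
      _ = ((coeff 1 y) • X) * pscomp H⁻¹ s := by rw [← hylin]
      _ = (coeff 1 y) • (X * pscomp H⁻¹ s) := by rw [smul_mul_assoc]
  obtain ⟨Cs, Rs, hCs, hRs, hgs⟩ := Aux5.main_bound hCK hRK hs0 hrel hgK
  exact Aux4.summable_of_geo hRs hgs
end

section
/- Let ν ≥ 1 be an integer and let A, B ∈ ℂ[[u]] be formal power series with A(0) ≠ 0 and ord(B) = ν + 1. Consider formal power series s ∈ ℂ[[t]] with ord(s) = 1 satisfying t^{ν+1}·A(s(t))·s'(t) = B(s(t)). Then: (i) every such s satisfies (coeff_1(s))^ν = A(0)/coeff_{ν+1}(B); (ii) if s1, s2 are two such solutions with coeff_i(s1) = coeff_i(s2) for all 1 ≤ i ≤ ν + 1, then s1 = s2; (iii) if A and B are convergent, then every such solution s is convergent. -/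
open PowerSeries Finset

section Alg
variable {R : Type*} [CommRing R]

lemma coeff_zero_of_X_pow_dvd {n : ℕ} {f : R⟦X⟧} (h : (X:R⟦X⟧)^n ∣ f) {m : ℕ} (hm : m < n) :
    coeff m f = 0 := (PowerSeries.X_pow_dvd_iff.mp h) m hm

lemma X_pow_dvd_pow {s : R⟦X⟧} (hs : constantCoeff s = 0) (k : ℕ) : (X:R⟦X⟧)^k ∣ s^k :=
  pow_dvd_pow_of_dvd (PowerSeries.X_dvd_iff.mpr hs) k

lemma coeff_mul_of_dvd {i j : ℕ} {u w : R⟦X⟧} (hu : (X:R⟦X⟧)^i ∣ u) (hw : (X:R⟦X⟧)^j ∣ w) :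
    coeff (i+j) (u*w) = coeff i u * coeff j w := by
  rw [coeff_mul, Finset.sum_eq_single (i, j)]
  · rintro ⟨p, q⟩ h1 h2
    rw [Finset.HasAntidiagonal.mem_antidiagonal] at h1
    have hne : p ≠ i ∨ q ≠ j := by
      by_contra hc
      push_neg at hc
      exact h2 (by rw [hc.1, hc.2])
    rcases lt_or_ge p i with hp | hp
    · rw [coeff_zero_of_X_pow_dvd hu hp, zero_mul]
    · have hq : q < j := by omega
      rw [coeff_zero_of_X_pow_dvd hw hq, mul_zero]
  · intro h; exact absurd (by simp [Finset.HasAntidiagonal.mem_antidiagonal] : (i, j) ∈ antidiagonal (i+j)) h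

lemma coeff_pow_self {s : R⟦X⟧} (hs : constantCoeff s = 0) (k : ℕ) :
    coeff k (s^k) = (coeff 1 s)^k := by
  induction k with
  | zero => simp
  | succ k ih =>
    have : s^(k+1) = s^k * s := pow_succ s k
    rw [this, coeff_mul_of_dvd (X_pow_dvd_pow hs k) (by simpa using X_pow_dvd_pow hs 1), ih,
      pow_succ]

lemma X_pow_dvd_sub {m : ℕ} {g h : R⟦X⟧} (hag : ∀ i ≤ m, coeff i g = coeff i h) :
    (X:R⟦X⟧)^(m+1) ∣ g - h := by
  rw [PowerSeries.X_pow_dvd_iff]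
  intro i hi
  rw [map_sub, hag i (by omega), sub_self]

lemma X_pow_dvd_geom {g h : R⟦X⟧} (hg : constantCoeff g = 0) (hh : constantCoeff h = 0)
    (k : ℕ) : (X:R⟦X⟧)^(k-1) ∣ ∑ i ∈ range k, g^i * h^(k-1-i) := by
  apply Finset.dvd_sum
  intro i hi
  rw [mem_range] at hi
  have : (X:R⟦X⟧)^(k-1) = X^i * X^(k-1-i) := by rw [← pow_add]; congr 1; omega
  rw [this]
  exact mul_dvd_mul (X_pow_dvd_pow hg i) (X_pow_dvd_pow hh (k-1-i))

lemma pow_sub_pow_eq {g h : R⟦X⟧} (k : ℕ) :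
    g^k - h^k = (∑ i ∈ range k, g^i * h^(k-1-i)) * (g - h) := (geom_sum₂_mul g h k).symm

/-- coefficients of `g^k` and `h^k` agree below `m + k` if `g,h` agree up to `m`. -/
lemma coeff_pow_congr {m : ℕ} {g h : R⟦X⟧} (hg : constantCoeff g = 0)
    (hh : constantCoeff h = 0) (hag : ∀ i ≤ m, coeff i g = coeff i h)
    {k N : ℕ} (hN : N < m + k) : coeff N (g^k) = coeff N (h^k) := by
  rcases Nat.eq_zero_or_pos k with rfl | hk
  · rfl
  have hdvd : (X:R⟦X⟧)^(m+k) ∣ g^k - h^k := by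
    rw [pow_sub_pow_eq k]
    have : (X:R⟦X⟧)^(m+k) = X^(k-1) * X^(m+1) := by rw [← pow_add]; congr 1; omega
    rw [this]
    exact mul_dvd_mul (X_pow_dvd_geom hg hh k) (X_pow_dvd_sub hag)
  have := coeff_zero_of_X_pow_dvd hdvd hN
  rw [map_sub, sub_eq_zero] at this
  exact this

/-- key coefficient difference formula at level `m + k`. -/
lemma coeff_pow_diag {m : ℕ} (hm : 1 ≤ m) {g h : R⟦X⟧} (hg : constantCoeff g = 0)
    (hh : constantCoeff h = 0) (hag : ∀ i ≤ m, coeff i g = coeff i h) (k : ℕ) :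
    coeff (m+k) (g^k) - coeff (m+k) (h^k)
      = (k : R) * (coeff 1 g)^(k-1) * (coeff (m+1) g - coeff (m+1) h) := by
  rcases Nat.eq_zero_or_pos k with rfl | hk
  · simp
  have key : coeff (m+k) (g^k - h^k)
      = coeff (k-1) (∑ i ∈ range k, g^i * h^(k-1-i)) * coeff (m+1) (g - h) := by
    rw [pow_sub_pow_eq k]
    have hmk : m + k = (k-1) + (m+1) := by omega
    rw [hmk]
    exact coeff_mul_of_dvd (X_pow_dvd_geom hg hh k) (X_pow_dvd_sub hag)
  have hsum : coeff (k-1) (∑ i ∈ range k, g^i * h^(k-1-i)) = (k:R) * (coeff 1 g)^(k-1) := by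
    rw [map_sum]
    have h1 : coeff 1 h = coeff 1 g := (hag 1 hm).symm
    have : ∀ i ∈ range k, coeff (k-1) (g^i * h^(k-1-i)) = (coeff 1 g)^(k-1) := by
      intro i hi
      rw [mem_range] at hi
      have hc := coeff_mul_of_dvd (R := R) (X_pow_dvd_pow hg i) (X_pow_dvd_pow hh (k-1-i))
      rw [show i + (k-1-i) = k-1 by omega] at hc
      rw [hc, coeff_pow_self hg, coeff_pow_self hh, h1, ← pow_add]
      congr 1; omega
    rw [Finset.sum_congr rfl this, Finset.sum_const, card_range, nsmul_eq_mul]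
  rw [map_sub] at key
  rw [key, hsum, map_sub]

end Alg

section PSC
open PowerSeries Finset

lemma coeff_pscomp (A s : ℂ⟦X⟧) (n : ℕ) :
    coeff n (pscomp A s) = ∑ k ∈ range (n + 1), coeff k A * coeff n (s ^ k) := by
  rw [pscomp, coeff_mk]

lemma coeff_pscomp_zero (A s : ℂ⟦X⟧) :
    coeff 0 (pscomp A s) = constantCoeff A := by
  rw [coeff_pscomp]
  simp

lemma pscomp_congr {m : ℕ} {g h : ℂ⟦X⟧} (hg : constantCoeff g = 0)
    (hh : constantCoeff h = 0) (hag : ∀ i ≤ m, coeff i g = coeff i h)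
    (A : ℂ⟦X⟧) {j : ℕ} (hj : j ≤ m) : coeff j (pscomp A g) = coeff j (pscomp A h) := by
  rw [coeff_pscomp, coeff_pscomp]
  apply Finset.sum_congr rfl
  intro k hk
  rcases Nat.eq_zero_or_pos k with rfl | hkpos
  · rfl
  · rw [coeff_pow_congr hg hh hag (by omega)]

/-- truncation of a power series at degree `m` -/
noncomputable def strunc (m : ℕ) (s : ℂ⟦X⟧) : ℂ⟦X⟧ :=
  PowerSeries.mk fun i => if i ≤ m then coeff i s else 0

lemma coeff_strunc (m : ℕ) (s : ℂ⟦X⟧) (i : ℕ) :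
    coeff i (strunc m s) = if i ≤ m then coeff i s else 0 := by
  rw [strunc, coeff_mk]

lemma strunc_const {m : ℕ} {s : ℂ⟦X⟧} (hs0 : coeff 0 s = 0) :
    constantCoeff (strunc m s) = 0 := by
  rw [← coeff_zero_eq_constantCoeff_apply, coeff_strunc, if_pos (Nat.zero_le m), hs0]

lemma strunc_agree (m : ℕ) (s : ℂ⟦X⟧) : ∀ i ≤ m, coeff i s = coeff i (strunc m s) := by
  intro i hi
  rw [coeff_strunc, if_pos hi]

/-- Coefficient extraction from the differential equation at degree `m+ν+1`. -/
lemma eq_coeff {ν : ℕ} {A B s : ℂ⟦X⟧}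
    (heq : X ^ (ν + 1) * pscomp A s * s.derivativeFun = pscomp B s) (m : ℕ) :
    (constantCoeff A) * (coeff (m+1) s * ((m:ℂ)+1))
      + ∑ j ∈ range m, coeff (j+1) (pscomp A s) * (coeff (m-j) s * (((m-j:ℕ)):ℂ))
      = ∑ k ∈ range (m+ν+2), coeff k B * coeff (m+ν+1) (s ^ k) := by
  have h := congrArg (coeff (m+ν+1)) heq
  rw [mul_assoc, show m+ν+1 = m+(ν+1) by omega, coeff_X_pow_mul, coeff_mul,
    Finset.Nat.sum_antidiagonal_eq_sum_range_succ_mk, Finset.sum_range_succ'] at h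
  simp only [Nat.sub_zero, show ∀ f : ℂ⟦X⟧, f.derivativeFun = derivative ℂ f from fun _ => rfl,
    coeff_derivativeFun] at h
  rw [coeff_pscomp_zero] at h
  rw [show m+(ν+1) = m+ν+1 by omega, coeff_pscomp B s] at h
  rw [show m+ν+2 = m+ν+1+1 by omega, ← h]
  have hre : ∀ j ∈ range m,
      coeff (j+1) (pscomp A s) * (coeff (m-j) s * (((m-j:ℕ)):ℂ))
        = coeff (j+1) (pscomp A s) * (coeff (m - (j+1) + 1) s * ((((m - (j+1):ℕ)):ℂ) + 1)) := by
    intro j hj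
    rw [mem_range] at hj
    rw [show m - (j+1) + 1 = m - j by omega, show ((m - (j+1) : ℕ) : ℂ) = ((m-j : ℕ):ℂ) - 1 by
      rw [show (m-j:ℕ) = (m - (j+1)) + 1 by omega]; push_cast; ring]
    ring
  rw [Finset.sum_congr rfl hre]
  ring
end PSC

section REC
open PowerSeries Finset

lemma part1_id {ν : ℕ} {A B s : ℂ⟦X⟧}
    (hBlow : ∀ k, k ≤ ν → coeff k B = 0)
    (hs0 : coeff 0 s = 0) (hs1 : coeff 1 s ≠ 0)
    (heq : X ^ (ν + 1) * pscomp A s * s.derivativeFun = pscomp B s) :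
    constantCoeff A = coeff (ν+1) B * (coeff 1 s)^ν := by
  have h := eq_coeff heq 0
  simp only [range_zero, Finset.sum_empty, Nat.cast_zero, zero_add, add_zero, mul_one] at h
  have hs0' : constantCoeff s = 0 := by rwa [← coeff_zero_eq_constantCoeff_apply]
  have hsum : ∑ k ∈ range (ν+2), coeff k B * coeff (ν+1) (s ^ k)
      = coeff (ν+1) B * (coeff 1 s)^(ν+1) := by
    rw [Finset.sum_eq_single (ν+1)]
    · rw [coeff_pow_self hs0']
    · intro k hk hne
      rw [mem_range] at hk
      rw [hBlow k (by omega), zero_mul]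
    · intro hmem; exact absurd (mem_range.mpr (by omega)) hmem
  rw [hsum] at h
  have : constantCoeff A * coeff 1 s = coeff (ν+1) B * (coeff 1 s)^ν * coeff 1 s := by
    rw [h, pow_succ]; ring
  exact mul_right_cancel₀ hs1 this

lemma REC {ν m : ℕ} (hm1 : 1 ≤ m) {A B s : ℂ⟦X⟧}
    (hs0 : coeff 0 s = 0)
    (hBlow : ∀ k, k ≤ ν → coeff k B = 0)
    (hid : constantCoeff A = coeff (ν+1) B * (coeff 1 s)^ν)
    (heq : X ^ (ν + 1) * pscomp A s * s.derivativeFun = pscomp B s) :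
    (constantCoeff A) * (((m:ℂ)+1) - ((ν:ℂ)+1)) * coeff (m+1) s
      = (∑ k ∈ range (m+ν+2), coeff k B * coeff (m+ν+1) ((strunc m s) ^ k))
        - ∑ j ∈ range m, coeff (j+1) (pscomp A (strunc m s)) * (coeff (m-j) s * (((m-j:ℕ)):ℂ)) := by
  have hs0' : constantCoeff s = 0 := by rwa [← coeff_zero_eq_constantCoeff_apply]
  have ht0 : constantCoeff (strunc m s) = 0 := strunc_const hs0
  have hag := strunc_agree m s
  have h := eq_coeff heq m
  have hconv : ∀ j ∈ range m,
      coeff (j+1) (pscomp A s) * (coeff (m-j) s * (((m-j:ℕ)):ℂ))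
        = coeff (j+1) (pscomp A (strunc m s)) * (coeff (m-j) s * (((m-j:ℕ)):ℂ)) := by
    intro j hj
    rw [mem_range] at hj
    rw [pscomp_congr hs0' ht0 hag A (by omega : j+1 ≤ m)]
  rw [Finset.sum_congr rfl hconv] at h
  have hdiff : (∑ k ∈ range (m+ν+2), coeff k B * coeff (m+ν+1) (s ^ k))
      = (∑ k ∈ range (m+ν+2), coeff k B * coeff (m+ν+1) ((strunc m s) ^ k))
        + ((ν:ℂ)+1) * (coeff 1 s)^ν * coeff (m+1) s * coeff (ν+1) B := by
    rw [← sub_eq_iff_eq_add', ← Finset.sum_sub_distrib]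
    have hterm : ∀ k ∈ range (m+ν+2),
        coeff k B * coeff (m+ν+1) (s ^ k) - coeff k B * coeff (m+ν+1) ((strunc m s) ^ k)
          = if k = ν+1 then ((ν:ℂ)+1) * (coeff 1 s)^ν * coeff (m+1) s * coeff (ν+1) B else 0 := by
      intro k hk
      rw [mem_range] at hk
      rcases eq_or_ne k (ν+1) with rfl | hne
      · rw [if_pos rfl, ← mul_sub]
        have hd := coeff_pow_diag hm1 hs0' ht0 hag (ν+1)
        rw [show m + (ν+1) = m+ν+1 by omega] at hd
        rw [hd]
        have : coeff (m+1) (strunc m s) = 0 := by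
          rw [coeff_strunc, if_neg (by omega)]
        rw [this, sub_zero, show (ν+1:ℕ) - 1 = ν by omega]
        push_cast
        ring
      · rw [if_neg hne, ← mul_sub]
        rcases lt_or_ge k (ν+1) with hlt | hge
        · rw [hBlow k (by omega), zero_mul]
        · rw [coeff_pow_congr hs0' ht0 hag (show m+ν+1 < m + k by omega), sub_self, mul_zero]
    rw [Finset.sum_congr rfl hterm, Finset.sum_ite_eq' (range (m+ν+2)) (ν+1),
      if_pos (mem_range.mpr (by omega))]
  rw [hdiff] at h
  linear_combination h - ((ν:ℂ)+1) * coeff (m+1) s * hid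

end REC

section UNIQ
open PowerSeries Finset

lemma order_facts {s : ℂ⟦X⟧} {n : ℕ} (hs : s.order = (n:ℕ∞)) :
    coeff n s ≠ 0 ∧ ∀ i, i < n → coeff i s = 0 := PowerSeries.order_eq_nat.mp hs

lemma uniq_core {ν : ℕ} (hν : 1 ≤ ν) {A B s₁ s₂ : ℂ⟦X⟧}
    (hA : constantCoeff A ≠ 0)
    (hBlow : ∀ k, k ≤ ν → coeff k B = 0)
    (hs0₁ : coeff 0 s₁ = 0) (hs1₁ : coeff 1 s₁ ≠ 0)
    (hs0₂ : coeff 0 s₂ = 0) (hs1₂ : coeff 1 s₂ ≠ 0)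
    (heq₁ : X ^ (ν + 1) * pscomp A s₁ * s₁.derivativeFun = pscomp B s₁)
    (heq₂ : X ^ (ν + 1) * pscomp A s₂ * s₂.derivativeFun = pscomp B s₂)
    (hagree : ∀ i : ℕ, i ≤ ν + 1 → coeff i s₁ = coeff i s₂) :
    s₁ = s₂ := by
  have hid₁ := part1_id hBlow hs0₁ hs1₁ heq₁
  have hid₂ := part1_id hBlow hs0₂ hs1₂ heq₂
  have key : ∀ n, coeff n s₁ = coeff n s₂ := by
    intro n
    induction n using Nat.strong_induction_on with
    | _ n ih =>
      rcases le_or_gt n (ν+1) with hn | hn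
      · exact hagree n hn
      · obtain ⟨m, rfl⟩ : ∃ m, n = m+1 := ⟨n-1, by omega⟩
        have hm1 : 1 ≤ m := by omega
        have r1 := REC (ν := ν) hm1 hs0₁ hBlow hid₁ heq₁
        have r2 := REC (ν := ν) hm1 hs0₂ hBlow hid₂ heq₂
        have htr : strunc m s₁ = strunc m s₂ := by
          apply PowerSeries.ext
          intro i
          rw [coeff_strunc, coeff_strunc]
          split_ifs with h
          · exact ih i (by omega)
          · rfl
        rw [htr] at r1
        have hcv : ∀ j ∈ range m,
            coeff (j+1) (pscomp A (strunc m s₂)) * (coeff (m-j) s₁ * (((m-j:ℕ)):ℂ))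
            = coeff (j+1) (pscomp A (strunc m s₂)) * (coeff (m-j) s₂ * (((m-j:ℕ)):ℂ)) := by
          intro j hj
          rw [ih (m-j) (by omega)]
        rw [Finset.sum_congr rfl hcv] at r1
        have hfac : ((m:ℂ)+1) - ((ν:ℂ)+1) ≠ 0 := by
          rw [sub_ne_zero]
          intro hc
          have : (m:ℕ) = ν := by exact_mod_cast (by
            have := hc; simp only [add_left_inj] at this; exact_mod_cast this : (m:ℂ) = (ν:ℂ))
          omega
        have := r1.trans r2.symm
        exact mul_left_cancel₀ (mul_ne_zero hA hfac) this
  exact PowerSeries.ext key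

end UNIQ

section MAJ
open PowerSeries Finset

/-- weight `1/n²` (with value `0` at `0`). -/
noncomputable def efun (j : ℕ) : ℝ := if j = 0 then 0 else 1/(j:ℝ)^2

lemma efun_nonneg (j : ℕ) : 0 ≤ efun j := by
  rw [efun]; split_ifs with h
  · exact le_refl 0
  · positivity

lemma efun_le_one (j : ℕ) : efun j ≤ 1 := by
  rw [efun]; split_ifs with h
  · norm_num
  · rw [div_le_one (by positivity)]
    have : (1:ℝ) ≤ (j:ℝ) := by exact_mod_cast Nat.one_le_iff_ne_zero.mpr h
    nlinarith

lemma efun_anti {i j : ℕ} (hi : 1 ≤ i) (hij : i ≤ j) : efun j ≤ efun i := by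
  rw [efun, efun, if_neg (by omega), if_neg (by omega)]
  apply div_le_div_of_nonneg_left (by norm_num) (by positivity)
  have : (i:ℝ) ≤ (j:ℝ) := by exact_mod_cast hij
  have hi' : (1:ℝ) ≤ (i:ℝ) := by exact_mod_cast hi
  nlinarith

lemma sum_invsq (S : ℕ) : ∑ k ∈ range (S+1), (1:ℝ)/((k:ℝ)+1)^2 ≤ 2 - 1/((S:ℝ)+1) := by
  induction S with
  | zero => norm_num
  | succ S ih =>
    rw [Finset.sum_range_succ]
    push_cast
    have h1 : ((S:ℝ)+1) ≠ 0 := by positivity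
    have h2 : ((S:ℝ)+1+1) ≠ 0 := by positivity
    have key : (1:ℝ)/((S:ℝ)+1+1)^2 ≤ 1/((S:ℝ)+1) - 1/((S:ℝ)+1+1) := by
      rw [div_sub_div _ _ h1 h2, div_le_div_iff₀ (by positivity) (by positivity)]
      nlinarith [sq_nonneg ((S:ℝ)+1)]
    linarith [ih]

lemma sum_efun_le (S : ℕ) : ∑ k ∈ range S, efun k ≤ 2 := by
  rcases Nat.eq_zero_or_pos S with rfl | hS
  · simp
  obtain ⟨T, rfl⟩ : ∃ T, S = T + 1 := ⟨S-1, by omega⟩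
  rw [Finset.sum_range_succ']
  have hc : ∀ k ∈ range T, efun (k+1) = 1/((k:ℝ)+1)^2 := by
    intro k hk; rw [efun, if_neg (by omega)]; push_cast; ring_nf
  rw [Finset.sum_congr rfl hc]
  have h0 : efun 0 = 0 := by rw [efun]; simp
  rw [h0, add_zero]
  rcases Nat.eq_zero_or_pos T with rfl | hT
  · simp
  obtain ⟨U, rfl⟩ : ∃ U, T = U + 1 := ⟨T-1, by omega⟩
  have := sum_invsq U
  have h1 : (0:ℝ) < 1/((U:ℝ)+1) := by positivity
  linarith

lemma aux_xy {x y : ℝ} (hx : 1 ≤ x) (hy : 1 ≤ y) :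
    1/(x^2*y^2) ≤ 4/(x+y)^2 * (1/x^2 + 1/y^2) := by
  have hx0 : (0:ℝ) < x := by linarith
  have hy0 : (0:ℝ) < y := by linarith
  have hxy : (0:ℝ) < x + y := by linarith
  rw [div_add_div _ _ (by positivity) (by positivity), div_mul_div_comm,
    div_le_div_iff₀ (by positivity) (by positivity)]
  nlinarith [sq_nonneg (x-y), sq_nonneg (x+y), sq_nonneg (x*y), mul_pos hx0 hy0,
    mul_pos (mul_pos hx0 hx0) (mul_pos hy0 hy0)]

lemma conv_efun (p : ℕ) : (∑ x ∈ antidiagonal p, efun x.1 * efun x.2) ≤ 16 * efun p := by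
  rcases Nat.eq_zero_or_pos p with rfl | hp
  · simp [efun]
  rw [Finset.Nat.sum_antidiagonal_eq_sum_range_succ_mk]
  have hterm : ∀ k ∈ range (p+1), efun k * efun (p-k) ≤ 4*efun p*(efun k + efun (p-k)) := by
    intro k hk
    rw [mem_range] at hk
    rcases Nat.eq_zero_or_pos k with rfl | hk0
    · rw [efun, if_pos rfl, zero_mul]
      have := efun_nonneg (p-0); have := efun_nonneg p; have := efun_nonneg 0; nlinarith
    rcases Nat.eq_zero_or_pos (p-k) with hpk | hpk0
    · have h0 : efun (p-k) = 0 := by rw [hpk, efun]; simp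
      rw [h0, mul_zero, add_zero]
      have := efun_nonneg k; have := efun_nonneg p
      nlinarith
    · have hkp : k < p := by omega
      rw [efun, efun, efun, if_neg (by omega), if_neg (by omega), if_neg (by omega)]
      have hx : (1:ℝ) ≤ (k:ℝ) := by exact_mod_cast hk0
      have hy : (1:ℝ) ≤ ((p-k:ℕ):ℝ) := by exact_mod_cast hpk0
      have hsum : (k:ℝ) + ((p-k:ℕ):ℝ) = (p:ℝ) := by
        rw [← Nat.cast_add]; congr 1; omega
      have := aux_xy hx hy
      rw [hsum] at this
      calc 1/(k:ℝ)^2 * (1/((p-k:ℕ):ℝ)^2) = 1/((k:ℝ)^2*((p-k:ℕ):ℝ)^2) := by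
            rw [one_div_mul_one_div]
        _ ≤ 4/(p:ℝ)^2 * (1/(k:ℝ)^2 + 1/((p-k:ℕ):ℝ)^2) := this
        _ = 4*(1/(p:ℝ)^2)*(1/(k:ℝ)^2 + 1/((p-k:ℕ):ℝ)^2) := by ring
  calc ∑ k ∈ range (p+1), efun k * efun (p-k)
      ≤ ∑ k ∈ range (p+1), 4*efun p*(efun k + efun (p-k)) := Finset.sum_le_sum hterm
    _ = 4*efun p*((∑ k ∈ range (p+1), efun k) + ∑ k ∈ range (p+1), efun (p-k)) := by
        rw [← Finset.mul_sum, Finset.sum_add_distrib]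
    _ = 4*efun p*((∑ k ∈ range (p+1), efun k) + ∑ k ∈ range (p+1), efun k) := by
        congr 2
        rw [← Finset.sum_range_reflect (fun k => efun (p-k)) (p+1)]
        apply Finset.sum_congr rfl
        intro k hk
        rw [mem_range] at hk
        congr 1
        omega
    _ ≤ 4*efun p*(2+2) := by
        have h1 := sum_efun_le (p+1)
        have h2 := efun_nonneg p
        nlinarith
    _ = 16 * efun p := by ring

end MAJ

section MAJ2
open PowerSeries Finset

/-- coefficientwise majorization of a complex series by a real series -/
def maj (f : ℂ⟦X⟧) (F : ℝ⟦X⟧) : Prop := ∀ n, ‖coeff n f‖ ≤ coeff n F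

lemma maj_coeff_nonneg {f F} (h : maj f F) (n : ℕ) : 0 ≤ coeff n F :=
  le_trans (norm_nonneg _) (h n)

lemma maj_one : maj 1 1 := by
  intro n
  rw [PowerSeries.coeff_one, PowerSeries.coeff_one]
  split_ifs <;> simp

lemma maj_mul {f g F G} (hf : maj f F) (hg : maj g G) : maj (f*g) (F*G) := by
  intro n
  rw [coeff_mul, coeff_mul]
  refine le_trans (norm_sum_le _ _) (Finset.sum_le_sum ?_)
  intro x hx
  rw [norm_mul]
  exact mul_le_mul (hf x.1) (hg x.2) (norm_nonneg _) (maj_coeff_nonneg hf x.1)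

lemma maj_pow {f F} (hf : maj f F) (k : ℕ) : maj (f^k) (F^k) := by
  induction k with
  | zero => simpa using maj_one
  | succ k ih =>
    rw [pow_succ, pow_succ]
    exact maj_mul ih hf

lemma coeff_pow_nonneg {F : ℝ⟦X⟧} (hF : ∀ n, 0 ≤ coeff n F) (k n : ℕ) :
    0 ≤ coeff n (F^k) := by
  induction k generalizing n with
  | zero =>
    rw [pow_zero, PowerSeries.coeff_one]
    split_ifs <;> norm_num
  | succ k ih =>
    rw [pow_succ, coeff_mul]
    exact Finset.sum_nonneg fun x _ => mul_nonneg (ih x.1) (hF x.2)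

/-- the majorant weight sequence -/
noncomputable def wfun (pp Bb : ℝ) (n : ℕ) : ℝ := (pp*Bb)^n / Bb * efun n

/-- the majorant power series -/
noncomputable def WS (pp Bb : ℝ) : ℝ⟦X⟧ := PowerSeries.mk (wfun pp Bb)

lemma coeff_WS (pp Bb : ℝ) (n : ℕ) : coeff n (WS pp Bb) = wfun pp Bb n := coeff_mk _ _

lemma wfun_nonneg {pp Bb : ℝ} (hp : 0 ≤ pp) (hB : 0 ≤ Bb) (n : ℕ) : 0 ≤ wfun pp Bb n := by
  rw [wfun]
  have := efun_nonneg n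
  positivity

lemma WS_pow_le {pp Bb : ℝ} (hp : 0 < pp) (hB : 0 < Bb) :
    ∀ k, 1 ≤ k → ∀ p, coeff p ((WS pp Bb)^k)
      ≤ 16^(k-1) * ((pp*Bb)^p * (1/Bb)^k) * efun p := by
  intro k
  induction k with
  | zero => omega
  | succ k ih =>
    intro _ p
    rcases Nat.eq_zero_or_pos k with rfl | hk
    · rw [pow_one, coeff_WS, wfun]
      simp only [show (1:ℕ)-1 = 0 from rfl, pow_zero, pow_one, one_mul]
      exact le_of_eq (by ring)
    · rw [pow_succ, coeff_mul]
      have hterm : ∀ x ∈ antidiagonal p,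
          coeff x.1 ((WS pp Bb)^k) * coeff x.2 (WS pp Bb)
            ≤ (16^(k-1) * ((pp*Bb)^x.1 * (1/Bb)^k) * efun x.1)
              * ((pp*Bb)^x.2 * (1/Bb) * efun x.2) := by
        intro x hx
        apply mul_le_mul
        · exact ih hk x.1
        · rw [coeff_WS, wfun]
          exact le_of_eq (by ring)
        · rw [coeff_WS]; exact wfun_nonneg hp.le hB.le x.2
        · have := efun_nonneg x.1; positivity
      refine le_trans (Finset.sum_le_sum hterm) ?_
      have hfac : ∀ x ∈ antidiagonal p,
          (16^(k-1) * ((pp*Bb)^x.1 * (1/Bb)^k) * efun x.1) * ((pp*Bb)^x.2 * (1/Bb) * efun x.2)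
            = (16^(k-1) * (pp*Bb)^p * (1/Bb)^(k+1)) * (efun x.1 * efun x.2) := by
        intro x hx
        rw [Finset.HasAntidiagonal.mem_antidiagonal] at hx
        rw [← hx, pow_add, pow_succ]
        ring
      rw [Finset.sum_congr rfl hfac, ← Finset.mul_sum]
      have hconv := conv_efun p
      have hpos : (0:ℝ) ≤ 16^(k-1) * (pp*Bb)^p * (1/Bb)^(k+1) := by positivity
      calc (16^(k-1) * (pp*Bb)^p * (1/Bb)^(k+1)) * (∑ x ∈ antidiagonal p, efun x.1 * efun x.2)
          ≤ (16^(k-1) * (pp*Bb)^p * (1/Bb)^(k+1)) * (16 * efun p) :=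
            mul_le_mul_of_nonneg_left hconv hpos
        _ = (16^(k-1)*16) * ((pp*Bb)^p * (1/Bb)^(k+1)) * efun p := by ring
        _ = 16^(k+1-1) * ((pp*Bb)^p * (1/Bb)^(k+1)) * efun p := by
            rw [show k+1-1 = k by omega, show (16:ℝ)^(k-1)*16 = 16^(k-1+1) by rw [pow_succ],
              show k-1+1 = k by omega]

/-- geometric tail bound -/
lemma geom_tail {q : ℝ} (hq0 : 0 ≤ q) (hq : q ≤ 1/2) :
    ∀ n, ∑ j ∈ range n, q^j ≤ 2 - 2*q^n := by
  intro n
  induction n with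
  | zero => norm_num
  | succ n ih =>
    rw [Finset.sum_range_succ]
    have h1 : q^(n+1) = q * q^n := by rw [pow_succ]; ring
    have h2 : 0 ≤ q^n := pow_nonneg hq0 n
    nlinarith

lemma geom_Ico {q : ℝ} (hq0 : 0 ≤ q) (hq : q ≤ 1/2) (a b : ℕ) :
    ∑ k ∈ Finset.Ico a b, q^k ≤ 2 * q^a := by
  rcases le_or_gt b a with h | h
  · rw [Finset.Ico_eq_empty (by omega), Finset.sum_empty]
    positivity
  · have : ∑ k ∈ Finset.Ico a b, q^k = q^a * ∑ j ∈ range (b-a), q^j := by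
      rw [Finset.mul_sum, Finset.sum_Ico_eq_sum_range]
      apply Finset.sum_congr rfl
      intro j hj
      rw [← pow_add]
    rw [this]
    have h2 := geom_tail hq0 hq (b-a)
    have h3 : 0 ≤ q^a := pow_nonneg hq0 a
    have h4 : 0 ≤ 2*q^(b-a) := by positivity
    nlinarith

end MAJ2

section CONV
open PowerSeries Finset

set_option maxHeartbeats 1000000 in
lemma conv_core {ν : ℕ} (hν : 1 ≤ ν) {A B s : ℂ⟦X⟧}
    (hA : constantCoeff A ≠ 0)
    (hBlow : ∀ k, k ≤ ν → coeff k B = 0)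
    (hs0 : coeff 0 s = 0) (hs1 : coeff 1 s ≠ 0)
    (heq : X ^ (ν + 1) * pscomp A s * s.derivativeFun = pscomp B s)
    (hsA : ∃ r : ℝ, 0 < r ∧ Summable fun i : ℕ => ‖coeff i A‖ * r ^ i)
    (hsB : ∃ r : ℝ, 0 < r ∧ Summable fun i : ℕ => ‖coeff i B‖ * r ^ i) :
    ∃ r : ℝ, 0 < r ∧ Summable fun i : ℕ => ‖coeff i s‖ * r ^ i := by
  classical
  obtain ⟨K, R, hK1, hR1, hKA, hKB⟩ : ∃ K R : ℝ, 1 ≤ K ∧ 1 ≤ R ∧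
      (∀ k, ‖coeff k A‖ ≤ K*R^k) ∧ (∀ k, ‖coeff k B‖ ≤ K*R^k) := by
    obtain ⟨rA, hrA, hsumA⟩ := hsA
    obtain ⟨rB, hrB, hsumB⟩ := hsB
    refine ⟨max (max (∑' i : ℕ, ‖coeff i A‖ * rA ^ i) (∑' i : ℕ, ‖coeff i B‖ * rB ^ i)) 1,
      max (max rA⁻¹ rB⁻¹) 1, le_max_right _ _, le_max_right _ _, ?_, ?_⟩
    · intro k
      have h1 : ‖coeff k A‖ * rA^k ≤ ∑' i : ℕ, ‖coeff i A‖ * rA^i :=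
        Summable.le_tsum hsumA k (fun i _ => by positivity)
      have h2 : ‖coeff k A‖ = (‖coeff k A‖ * rA^k) * (rA⁻¹)^k := by
        rw [mul_assoc, ← mul_pow, mul_inv_cancel₀ (ne_of_gt hrA), one_pow, mul_one]
      rw [h2]
      have h3 : (rA⁻¹)^k ≤ (max (max rA⁻¹ rB⁻¹) 1)^k :=
        pow_le_pow_left₀ (by positivity) (le_trans (le_max_left _ _) (le_max_left _ _)) k
      have h4 : ∑' i : ℕ, ‖coeff i A‖ * rA^i
          ≤ max (max (∑' i : ℕ, ‖coeff i A‖ * rA ^ i) (∑' i : ℕ, ‖coeff i B‖ * rB ^ i)) 1 :=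
        le_trans (le_max_left _ _) (le_max_left _ _)
      exact mul_le_mul (le_trans h1 h4) h3 (by positivity)
        (le_trans zero_le_one (le_max_right _ _))
    · intro k
      have h1 : ‖coeff k B‖ * rB^k ≤ ∑' i : ℕ, ‖coeff i B‖ * rB^i :=
        Summable.le_tsum hsumB k (fun i _ => by positivity)
      have h2 : ‖coeff k B‖ = (‖coeff k B‖ * rB^k) * (rB⁻¹)^k := by
        rw [mul_assoc, ← mul_pow, mul_inv_cancel₀ (ne_of_gt hrB), one_pow, mul_one]
      rw [h2]
      have h3 : (rB⁻¹)^k ≤ (max (max rA⁻¹ rB⁻¹) 1)^k :=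
        pow_le_pow_left₀ (by positivity) (le_trans (le_max_right _ _) (le_max_left _ _)) k
      have h4 : ∑' i : ℕ, ‖coeff i B‖ * rB^i
          ≤ max (max (∑' i : ℕ, ‖coeff i A‖ * rA ^ i) (∑' i : ℕ, ‖coeff i B‖ * rB ^ i)) 1 :=
        le_trans (le_max_right _ _) (le_max_left _ _)
      exact mul_le_mul (le_trans h1 h4) h3 (by positivity)
        (le_trans zero_le_one (le_max_right _ _))
  have hK0 : (0:ℝ) < K := lt_of_lt_of_le one_pos hK1
  have hR0 : (0:ℝ) < R := lt_of_lt_of_le one_pos hR1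
  have ha : (0:ℝ) < ‖constantCoeff A‖ := norm_pos_iff.mpr hA
  have hp : (0:ℝ) < ‖coeff 1 s‖ := norm_pos_iff.mpr hs1
  obtain ⟨Ms, hMs2, hMsP⟩ : ∃ Ms : ℕ, 2*ν+2 ≤ Ms ∧ ∀ m : ℕ, Ms ≤ m →
      (K/8)*(16*R)^(ν+1)*‖coeff 1 s‖^ν ≤ (‖constantCoeff A‖/2)*((m-ν:ℕ):ℝ) := by
    refine ⟨2*ν+2+Nat.ceil (K*(16*R)^(ν+1)*‖coeff 1 s‖^ν/‖constantCoeff A‖), by omega, ?_⟩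
    intro m hm
    have h1 : (Nat.ceil (K*(16*R)^(ν+1)*‖coeff 1 s‖^ν/‖constantCoeff A‖) : ℕ) ≤ m - ν := by
      omega
    have h2 : K*(16*R)^(ν+1)*‖coeff 1 s‖^ν/‖constantCoeff A‖ ≤ ((m-ν:ℕ):ℝ) :=
      le_trans (Nat.le_ceil _) (by exact_mod_cast h1)
    rw [div_le_iff₀ ha] at h2
    have h3 : (0:ℝ) ≤ K*(16*R)^(ν+1)*‖coeff 1 s‖^ν := by positivity
    nlinarith
  obtain ⟨Bb, hBb1, hBbR, hBbK, hBbbase⟩ : ∃ Bb : ℝ, 1 ≤ Bb ∧ 32*R ≤ Bb ∧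
      128*K*R/‖constantCoeff A‖ ≤ Bb ∧
      ∀ n, n ≤ Ms → (n:ℝ)^2 * ‖coeff n s‖ / ‖coeff 1 s‖^n ≤ Bb := by
    refine ⟨32*R + 128*K*R/‖constantCoeff A‖ + 1
        + ∑ n ∈ range (Ms+1), (n:ℝ)^2 * ‖coeff n s‖ / ‖coeff 1 s‖^n, ?_, ?_, ?_, ?_⟩
    · have h1 : (0:ℝ) ≤ 32*R := by positivity
      have h2 : (0:ℝ) ≤ 128*K*R/‖constantCoeff A‖ := by positivity
      have h3 : (0:ℝ) ≤ ∑ n ∈ range (Ms+1), (n:ℝ)^2 * ‖coeff n s‖ / ‖coeff 1 s‖^n :=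
        Finset.sum_nonneg fun n _ => by positivity
      linarith
    · have h2 : (0:ℝ) ≤ 128*K*R/‖constantCoeff A‖ := by positivity
      have h3 : (0:ℝ) ≤ ∑ n ∈ range (Ms+1), (n:ℝ)^2 * ‖coeff n s‖ / ‖coeff 1 s‖^n :=
        Finset.sum_nonneg fun n _ => by positivity
      linarith
    · have h1 : (0:ℝ) ≤ 32*R := by positivity
      have h3 : (0:ℝ) ≤ ∑ n ∈ range (Ms+1), (n:ℝ)^2 * ‖coeff n s‖ / ‖coeff 1 s‖^n :=
        Finset.sum_nonneg fun n _ => by positivity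
      linarith
    · intro n hn
      have h1 : (n:ℝ)^2 * ‖coeff n s‖ / ‖coeff 1 s‖^n
          ≤ ∑ j ∈ range (Ms+1), (j:ℝ)^2 * ‖coeff j s‖ / ‖coeff 1 s‖^j :=
        Finset.single_le_sum (f := fun j : ℕ => (j:ℝ)^2 * ‖coeff j s‖ / ‖coeff 1 s‖^j)
          (fun j _ => by positivity) (Finset.mem_range.mpr (by omega))
      have h2 : (0:ℝ) ≤ 32*R := by positivity
      have h3 : (0:ℝ) ≤ 128*K*R/‖constantCoeff A‖ := by positivity
      linarith
  have hBb0 : (0:ℝ) < Bb := lt_of_lt_of_le one_pos hBb1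
  -- notation
  set pp : ℝ := ‖coeff 1 s‖ with hppdef
  set a : ℝ := ‖constantCoeff A‖ with hadef
  have hq0 : (0:ℝ) ≤ 16*R/Bb := by positivity
  have hqhalf : 16*R/Bb ≤ 1/2 := by
    have h32 : (0:ℝ) < 32*R := by positivity
    calc 16*R/Bb ≤ 16*R/(32*R) := div_le_div_of_nonneg_left (by positivity) h32 hBbR
      _ = 1/2 := by
          rw [div_eq_div_iff (by positivity) (by norm_num)]
          ring
  have wfun_eq : ∀ n : ℕ, 1 ≤ n → wfun pp Bb n = pp^n * Bb^(n-1) * (1/(n:ℝ)^2) := by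
    intro n hn
    rw [wfun, efun, if_neg (by omega), mul_pow]
    rw [show n = (n-1)+1 by omega, pow_succ Bb]
    field_simp
    ring_nf
    congr 1
    omega
  have wfun0 : wfun pp Bb 0 = 0 := by rw [wfun, efun]; simp
  have wfun1 : wfun pp Bb 1 = pp := by rw [wfun_eq 1 le_rfl]; norm_num
  have hwnn : ∀ n, 0 ≤ wfun pp Bb n := wfun_nonneg hp.le hBb0.le
  -- bound for pscomp A coefficients
  have hApsc : ∀ f : ℂ⟦X⟧, maj f (WS pp Bb) → ∀ j, 1 ≤ j →
      ‖coeff j (pscomp A f)‖ ≤ 2*K*R*(wfun pp Bb j) := by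
    intro f hf j hj
    rw [coeff_pscomp]
    refine le_trans (norm_sum_le _ _) ?_
    have hterm : ∀ k ∈ range (j+1), ‖coeff k A * coeff j (f^k)‖
        ≤ if k = 0 then 0 else (K*R/Bb)*(16*R/Bb)^(k-1)*((pp*Bb)^j * efun j) := by
      intro k hk
      rcases Nat.eq_zero_or_pos k with rfl | hk0
      · rw [if_pos rfl, pow_zero, norm_mul]
        have h0 : coeff j (1:ℂ⟦X⟧) = 0 := by
          rw [PowerSeries.coeff_one, if_neg (by omega)]
        rw [h0, norm_zero, mul_zero]
      · rw [if_neg (by omega), norm_mul]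
        have h1 : ‖coeff j (f^k)‖ ≤ coeff j ((WS pp Bb)^k) := maj_pow hf k j
        have h2 := WS_pow_le hp hBb0 k hk0 j
        calc ‖coeff k A‖ * ‖coeff j (f^k)‖
            ≤ (K*R^k) * (16^(k-1) * ((pp*Bb)^j * (1/Bb)^k) * efun j) := by
              apply mul_le_mul (hKA k) (le_trans h1 h2) (norm_nonneg _) (by positivity)
          _ = (K*R/Bb)*(16*R/Bb)^(k-1)*((pp*Bb)^j * efun j) := by
              rw [show k = (k-1)+1 by omega]
              simp only [Nat.add_sub_cancel]
              rw [pow_succ R, pow_succ (1/Bb), mul_pow, div_pow, div_pow, one_pow]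
              field_simp
              ring
    refine le_trans (Finset.sum_le_sum hterm) ?_
    rw [Finset.sum_range_succ', if_pos rfl, add_zero]
    have hsimp : ∀ k ∈ range j,
        (if k+1 = 0 then (0:ℝ) else (K*R/Bb)*(16*R/Bb)^(k+1-1)*((pp*Bb)^j * efun j))
          = ((K*R/Bb)*((pp*Bb)^j * efun j))*(16*R/Bb)^k := by
      intro k hk
      rw [if_neg (by omega)]
      simp only [Nat.add_sub_cancel]
      ring
    rw [Finset.sum_congr rfl hsimp, ← Finset.mul_sum]
    have hg := geom_tail hq0 hqhalf j
    have hgle : ∑ x ∈ range j, (16*R/Bb)^x ≤ 2 := by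
      have h2 : (0:ℝ) ≤ 2*(16*R/Bb)^j := by positivity
      linarith
    have hpos : (0:ℝ) ≤ (K*R/Bb)*((pp*Bb)^j * efun j) := by
      have := efun_nonneg j; positivity
    calc ((K*R/Bb)*((pp*Bb)^j * efun j)) * ∑ x ∈ range j, (16*R/Bb)^x
        ≤ ((K*R/Bb)*((pp*Bb)^j * efun j)) * 2 := mul_le_mul_of_nonneg_left hgle hpos
      _ = 2*K*R*((pp*Bb)^j/Bb * efun j) := by field_simp
      _ = 2*K*R*(wfun pp Bb j) := by rw [wfun]
  -- bound for the B-sum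
  have hBsum : ∀ f : ℂ⟦X⟧, maj f (WS pp Bb) → ∀ m : ℕ, ν+1 ≤ m →
      ‖∑ k ∈ range (m+ν+2), coeff k B * coeff (m+ν+1) (f^k)‖
        ≤ ((K/8)*(16*R)^(ν+1)*pp^ν) * wfun pp Bb (m+1) := by
    intro f hf m hm
    refine le_trans (norm_sum_le _ _) ?_
    have hterm : ∀ k ∈ range (m+ν+2), ‖coeff k B * coeff (m+ν+1) (f^k)‖
        ≤ if k ≤ ν then 0
          else ((K/16)*((pp*Bb)^(m+ν+1) * efun (m+ν+1)))*(16*R/Bb)^k := by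
      intro k hk
      rcases le_or_gt k ν with hkν | hkν
      · rw [if_pos hkν, norm_mul, hBlow k hkν, norm_zero, zero_mul]
      · rw [if_neg (by omega), norm_mul]
        have hk0 : 1 ≤ k := by omega
        have h1 : ‖coeff (m+ν+1) (f^k)‖ ≤ coeff (m+ν+1) ((WS pp Bb)^k) :=
          maj_pow hf k (m+ν+1)
        have h2 := WS_pow_le hp hBb0 k hk0 (m+ν+1)
        calc ‖coeff k B‖ * ‖coeff (m+ν+1) (f^k)‖
            ≤ (K*R^k) * (16^(k-1) * ((pp*Bb)^(m+ν+1) * (1/Bb)^k) * efun (m+ν+1)) :=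
              mul_le_mul (hKB k) (le_trans h1 h2) (norm_nonneg _) (by positivity)
          _ = ((K/16)*((pp*Bb)^(m+ν+1) * efun (m+ν+1)))*(16*R/Bb)^k := by
              have e1 : (16:ℝ)^(k-1) = 16^k/16 := by
                rw [show k = (k-1)+1 by omega, pow_succ]
                simp only [Nat.add_sub_cancel]
                field_simp
              have e2 : ((16*R/Bb:ℝ))^k = 16^k*R^k/Bb^k := by
                rw [div_pow, mul_pow]
              have e3 : ((1/Bb:ℝ))^k = 1/Bb^k := by
                rw [div_pow, one_pow]
              rw [e1, e2, e3]
              field_simp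
    refine le_trans (Finset.sum_le_sum hterm) ?_
    have hsplit : ∑ k ∈ range (m+ν+2), (if k ≤ ν then (0:ℝ)
          else ((K/16)*((pp*Bb)^(m+ν+1) * efun (m+ν+1)))*(16*R/Bb)^k)
        = ∑ k ∈ Finset.Ico (ν+1) (m+ν+2),
            ((K/16)*((pp*Bb)^(m+ν+1) * efun (m+ν+1)))*(16*R/Bb)^k := by
      rw [Finset.range_eq_Ico,
        ← Finset.sum_Ico_consecutive _ (Nat.zero_le (ν+1)) (by omega : ν+1 ≤ m+ν+2)]
      have h0 : ∑ k ∈ Finset.Ico 0 (ν+1), (if k ≤ ν then (0:ℝ)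
          else ((K/16)*((pp*Bb)^(m+ν+1) * efun (m+ν+1)))*(16*R/Bb)^k) = 0 := by
        apply Finset.sum_eq_zero
        intro k hk
        rw [Finset.mem_Ico] at hk
        rw [if_pos (by omega)]
      rw [h0, zero_add]
      apply Finset.sum_congr rfl
      intro k hk
      rw [Finset.mem_Ico] at hk
      rw [if_neg (by omega)]
    rw [hsplit, ← Finset.mul_sum]
    have hcf : (0:ℝ) ≤ (K/16)*((pp*Bb)^(m+ν+1) * efun (m+ν+1)) := by
      have := efun_nonneg (m+ν+1); positivity
    have hgeo := geom_Ico hq0 hqhalf (ν+1) (m+ν+2)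
    calc ((K/16)*((pp*Bb)^(m+ν+1) * efun (m+ν+1))) * ∑ k ∈ Finset.Ico (ν+1) (m+ν+2), (16*R/Bb)^k
        ≤ ((K/16)*((pp*Bb)^(m+ν+1) * efun (m+ν+1))) * (2*(16*R/Bb)^(ν+1)) :=
          mul_le_mul_of_nonneg_left hgeo hcf
      _ = ((K/8)*(16*R)^(ν+1)*pp^ν) * ((pp*Bb)^(m+1)/Bb * efun (m+ν+1)) := by
          rw [show m+ν+1 = (m+1)+ν by omega, pow_add, div_pow, mul_pow, mul_pow]
          field_simp
          ring
      _ ≤ ((K/8)*(16*R)^(ν+1)*pp^ν) * ((pp*Bb)^(m+1)/Bb * efun (m+1)) := by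
          apply mul_le_mul_of_nonneg_left _ (by positivity)
          apply mul_le_mul_of_nonneg_left _ (by positivity)
          exact efun_anti (by omega) (by omega)
      _ = ((K/8)*(16*R)^(ν+1)*pp^ν) * wfun pp Bb (m+1) := by rw [wfun]
  -- convolution bound for w
  have hconvW : ∀ m : ℕ, ∑ j ∈ range m, wfun pp Bb (j+1) * wfun pp Bb (m-j)
      ≤ (16/Bb) * wfun pp Bb (m+1) := by
    intro m
    have h1 : ∑ j ∈ range m, wfun pp Bb (j+1) * wfun pp Bb (m-j)
        = ∑ i ∈ range (m+2), wfun pp Bb i * wfun pp Bb (m+1-i) := by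
      rw [Finset.sum_range_succ' (fun i => wfun pp Bb i * wfun pp Bb (m+1-i)) (m+1)]
      rw [show m+1-0 = m+1 by omega, wfun0, zero_mul, add_zero]
      rw [Finset.sum_range_succ]
      rw [show m+1-(m+1) = 0 by omega, wfun0, mul_zero, add_zero]
      apply Finset.sum_congr rfl
      intro j hj
      rw [mem_range] at hj
      rw [show m+1-(j+1) = m-j by omega]
    rw [h1, ← Finset.Nat.sum_antidiagonal_eq_sum_range_succ_mk
      (fun x : ℕ × ℕ => wfun pp Bb x.1 * wfun pp Bb x.2) (m+1)]
    have hterm : ∀ x ∈ antidiagonal (m+1), wfun pp Bb x.1 * wfun pp Bb x.2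
        = ((pp*Bb)^(m+1)*(1/Bb)^2) * (efun x.1 * efun x.2) := by
      intro x hx
      rw [Finset.HasAntidiagonal.mem_antidiagonal] at hx
      rw [wfun, wfun, ← hx, pow_add]
      field_simp
    rw [Finset.sum_congr rfl hterm, ← Finset.mul_sum]
    have hconv := conv_efun (m+1)
    calc ((pp*Bb)^(m+1)*(1/Bb)^2) * (∑ x ∈ antidiagonal (m+1), efun x.1 * efun x.2)
        ≤ ((pp*Bb)^(m+1)*(1/Bb)^2) * (16*efun (m+1)) :=
          mul_le_mul_of_nonneg_left hconv (by positivity)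
      _ = (16/Bb) * wfun pp Bb (m+1) := by
          rw [wfun]
          field_simp
  -- the main induction
  have hid := part1_id hBlow hs0 hs1 heq
  have hmain : ∀ n, ‖coeff n s‖ ≤ wfun pp Bb n := by
    intro n
    induction n using Nat.strong_induction_on with
    | _ n ih =>
      rcases le_or_gt n Ms with hn | hn
      · -- base range
        match n, hn with
        | 0, _ => rw [hs0, norm_zero, wfun0]
        | 1, _ => rw [wfun1]
        | (n+2), hn =>
          have hbase := hBbbase (n+2) hn
          have hBpow : Bb ≤ Bb^(n+1) := by
            calc Bb = Bb^1 := (pow_one Bb).symm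
              _ ≤ Bb^(n+1) := pow_le_pow_right₀ hBb1 (by omega)
          rw [wfun_eq (n+2) (by omega)]
          rw [show (n+2)-1 = n+1 by omega]
          have hn2 : (0:ℝ) < ((n+2:ℕ):ℝ)^2 := by positivity
          rw [mul_one_div, le_div_iff₀ hn2]
          rw [div_le_iff₀ (by positivity)] at hbase
          have h5 : Bb * pp^(n+2) ≤ Bb^(n+1) * pp^(n+2) :=
            mul_le_mul_of_nonneg_right hBpow (by positivity)
          nlinarith [norm_nonneg (coeff (n+2) s)]
      · -- inductive step
        obtain ⟨m, rfl⟩ : ∃ m, n = m+1 := ⟨n-1, by omega⟩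
        have hm : Ms ≤ m := by omega
        have hm1 : 1 ≤ m := by omega
        have hνm : ν + 1 ≤ m := by omega
        have hrec := REC (ν := ν) hm1 hs0 hBlow hid heq
        have hmaj : maj (strunc m s) (WS pp Bb) := by
          intro i
          rw [coeff_strunc, coeff_WS]
          split_ifs with h
          · exact ih i (by omega)
          · rw [norm_zero]; exact hwnn i
        have hnorm := congrArg norm hrec
        rw [norm_mul, norm_mul] at hnorm
        have hfac : ‖((m:ℂ)+1) - ((ν:ℂ)+1)‖ = ((m-ν:ℕ):ℝ) := by
          rw [show ((m:ℂ)+1) - ((ν:ℂ)+1) = (((m-ν:ℕ)):ℂ) by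
            push_cast [Nat.cast_sub (by omega : ν ≤ m)]; ring]
          exact Complex.norm_natCast _
        rw [hfac] at hnorm
        have hT1 := hBsum (strunc m s) hmaj m hνm
        have hT2 : ‖∑ j ∈ range m, coeff (j+1) (pscomp A (strunc m s))
              * (coeff (m-j) s * (((m-j:ℕ)):ℂ))‖
            ≤ (a/4)*((m:ℝ)+1)*wfun pp Bb (m+1) := by
          refine le_trans (norm_sum_le _ _) ?_
          have hterm : ∀ j ∈ range m, ‖coeff (j+1) (pscomp A (strunc m s))
                * (coeff (m-j) s * (((m-j:ℕ)):ℂ))‖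
              ≤ (2*K*R*((m:ℝ)+1)) * (wfun pp Bb (j+1) * wfun pp Bb (m-j)) := by
            intro j hj
            rw [mem_range] at hj
            rw [norm_mul, norm_mul]
            have h1 : ‖coeff (j+1) (pscomp A (strunc m s))‖ ≤ 2*K*R*wfun pp Bb (j+1) :=
              hApsc _ hmaj (j+1) (by omega)
            have h2 : ‖coeff (m-j) s‖ ≤ wfun pp Bb (m-j) := ih (m-j) (by omega)
            have h3 : ‖(((m-j:ℕ)):ℂ)‖ ≤ (m:ℝ)+1 := by
              rw [Complex.norm_natCast]
              have : ((m-j:ℕ):ℝ) ≤ ((m+1:ℕ):ℝ) := Nat.cast_le.mpr (by omega)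
              push_cast at this
              linarith
            have h4 : ‖coeff (m-j) s‖ * ‖(((m-j:ℕ)):ℂ)‖
                ≤ wfun pp Bb (m-j) * ((m:ℝ)+1) :=
              mul_le_mul h2 h3 (norm_nonneg _) (hwnn _)
            refine le_trans (mul_le_mul h1 h4 (by positivity)
              (mul_nonneg (by positivity) (hwnn (j+1)))) ?_
            exact le_of_eq (by ring)
          refine le_trans (Finset.sum_le_sum hterm) ?_
          rw [← Finset.mul_sum]
          have hcw := hconvW m
          have h2 : 32*K*R/Bb ≤ a/4 := by
            rw [div_le_iff₀ hBb0]
            rw [div_le_iff₀ ha] at hBbK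
            nlinarith
          calc (2*K*R*((m:ℝ)+1)) * (∑ j ∈ range m, wfun pp Bb (j+1) * wfun pp Bb (m-j))
              ≤ (2*K*R*((m:ℝ)+1)) * ((16/Bb)*wfun pp Bb (m+1)) :=
                mul_le_mul_of_nonneg_left hcw (by positivity)
            _ = (((m:ℝ)+1)*wfun pp Bb (m+1))*(32*K*R/Bb) := by field_simp; ring
            _ ≤ (((m:ℝ)+1)*wfun pp Bb (m+1))*(a/4) := by
                apply mul_le_mul_of_nonneg_left h2
                exact mul_nonneg (by positivity) (hwnn (m+1))
            _ = (a/4)*((m:ℝ)+1)*wfun pp Bb (m+1) := by ring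
        -- combine
        have hS1 : ((K/8)*(16*R)^(ν+1)*pp^ν) * wfun pp Bb (m+1)
            ≤ ((a/2)*((m-ν:ℕ):ℝ)) * wfun pp Bb (m+1) :=
          mul_le_mul_of_nonneg_right (hMsP m hm) (hwnn (m+1))
        have hS2 : (a/4)*((m:ℝ)+1)*wfun pp Bb (m+1)
            ≤ ((a/2)*((m-ν:ℕ):ℝ)) * wfun pp Bb (m+1) := by
          have hcst : (m:ℝ)+1 ≤ 2*((m-ν:ℕ):ℝ) := by
            have : ((m+1:ℕ):ℝ) ≤ ((2*(m-ν):ℕ):ℝ) := Nat.cast_le.mpr (by omega)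
            push_cast at this
            linarith
          have hw := hwnn (m+1)
          nlinarith [mul_nonneg (mul_nonneg (le_of_lt ha) (sub_nonneg.mpr hcst)) hw]
        have hRHS := norm_sub_le
          (∑ k ∈ range (m+ν+2), coeff k B * coeff (m+ν+1) ((strunc m s) ^ k))
          (∑ j ∈ range m, coeff (j+1) (pscomp A (strunc m s))
            * (coeff (m-j) s * (((m-j:ℕ)):ℂ)))
        have hfinal : a*((m-ν:ℕ):ℝ)*‖coeff (m+1) s‖ ≤ a*((m-ν:ℕ):ℝ)*wfun pp Bb (m+1) := by
          have hl : a*((m-ν:ℕ):ℝ)*‖coeff (m+1) s‖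
              = ‖constantCoeff A‖ * ((m-ν:ℕ):ℝ) * ‖coeff (m+1) s‖ := by rw [hadef]
          rw [hl, hnorm]
          calc _ ≤ ((a/2)*((m-ν:ℕ):ℝ)) * wfun pp Bb (m+1)
                + ((a/2)*((m-ν:ℕ):ℝ)) * wfun pp Bb (m+1) := by
                have := le_trans hRHS (add_le_add (le_trans hT1 hS1) (le_trans hT2 hS2))
                linarith
            _ = a*((m-ν:ℕ):ℝ)*wfun pp Bb (m+1) := by ring
        have hposf : (0:ℝ) < a*((m-ν:ℕ):ℝ) := by
          have h1 : (0:ℝ) < ((m-ν:ℕ):ℝ) := by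
            have h2 : (0:ℕ) < m - ν := by omega
            exact_mod_cast h2
          exact mul_pos ha h1
        rw [mul_assoc, mul_assoc] at hfinal
        exact le_of_mul_le_mul_left ((mul_le_mul_iff_right₀ ha).mp hfinal) (by
          have h2 : (0:ℕ) < m - ν := by omega
          exact_mod_cast h2)
  -- conclusion
  refine ⟨1/(2*(pp*Bb)), by positivity, ?_⟩
  have hgeo : Summable (fun i : ℕ => (1/2:ℝ)^i) :=
    summable_geometric_of_lt_one (by norm_num) (by norm_num)
  apply Summable.of_nonneg_of_le (fun i => by positivity) (fun i => ?_) hgeo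
  calc ‖coeff i s‖*(1/(2*(pp*Bb)))^i
      ≤ wfun pp Bb i * (1/(2*(pp*Bb)))^i :=
        mul_le_mul_of_nonneg_right (hmain i) (by positivity)
    _ = (1/2:ℝ)^i * (efun i / Bb) := by
        rw [wfun]
        have h1 : (pp*Bb)*(1/(2*(pp*Bb))) = 1/2 := by
          rw [mul_one_div, div_eq_div_iff (by positivity) (by norm_num)]
          ring
        calc (pp*Bb)^i/Bb*efun i*(1/(2*(pp*Bb)))^i
            = ((pp*Bb)*(1/(2*(pp*Bb))))^i * (efun i/Bb) := by rw [mul_pow]; ring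
          _ = (1/2:ℝ)^i*(efun i/Bb) := by rw [h1]
    _ ≤ (1/2:ℝ)^i * 1 := by
        apply mul_le_mul_of_nonneg_left _ (by positivity)
        rw [div_le_one hBb0]
        exact le_trans (efun_le_one i) hBb1
    _ = (1/2:ℝ)^i := mul_one _


end CONV

/-- Properties of order-one solutions `s` of the associated differential equation
`t^{ν+1} A(s(t)) s'(t) = B(s(t))` when `A(0) ≠ 0` and `ord B = ν + 1`:
(i) `(coeff₁ s)^ν = A(0) / coeff_{ν+1}(B)`; (ii) two solutions agreeing in all
coefficients of index `≤ ν + 1` are equal; (iii) if `A` and `B` are convergent,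
every solution is convergent. -/
theorem assoc_equation_at_infinity
    (ν : ℕ) (hν : 1 ≤ ν) (A B : PowerSeries ℂ)
    (hA : PowerSeries.constantCoeff A ≠ 0)
    (hB : B.order = ((ν + 1 : ℕ))) :
    (∀ s : PowerSeries ℂ, s.order = 1 →
      PowerSeries.X ^ (ν + 1) * pscomp A s * s.derivativeFun = pscomp B s →
      (PowerSeries.coeff 1 s) ^ ν =
        PowerSeries.constantCoeff A / PowerSeries.coeff (ν + 1) B) ∧
    (∀ s₁ s₂ : PowerSeries ℂ, s₁.order = 1 → s₂.order = 1 →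
      PowerSeries.X ^ (ν + 1) * pscomp A s₁ * s₁.derivativeFun = pscomp B s₁ →
      PowerSeries.X ^ (ν + 1) * pscomp A s₂ * s₂.derivativeFun = pscomp B s₂ →
      (∀ i : ℕ, i ≤ ν + 1 → PowerSeries.coeff i s₁ = PowerSeries.coeff i s₂) →
      s₁ = s₂) ∧
    ((∃ r : ℝ, 0 < r ∧ Summable fun i : ℕ => ‖PowerSeries.coeff i A‖ * r ^ i) →
     (∃ r : ℝ, 0 < r ∧ Summable fun i : ℕ => ‖PowerSeries.coeff i B‖ * r ^ i) →
     ∀ s : PowerSeries ℂ, s.order = 1 →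
      PowerSeries.X ^ (ν + 1) * pscomp A s * s.derivativeFun = pscomp B s →
      ∃ r : ℝ, 0 < r ∧ Summable fun i : ℕ => ‖PowerSeries.coeff i s‖ * r ^ i) := by
  have hBfacts := PowerSeries.order_eq_nat.mp hB
  have hBtop : PowerSeries.coeff (ν+1) B ≠ 0 := hBfacts.1
  have hBlow : ∀ k, k ≤ ν → PowerSeries.coeff k B = 0 := fun k hk =>
    hBfacts.2 k (by omega)
  have hordS : ∀ s : PowerSeries ℂ, s.order = 1 →
      PowerSeries.coeff 0 s = 0 ∧ PowerSeries.coeff 1 s ≠ 0 := by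
    intro s hs
    have hs' : s.order = ((1:ℕ):ℕ∞) := by exact_mod_cast hs
    have hf := PowerSeries.order_eq_nat.mp hs'
    exact ⟨hf.2 0 (by omega), hf.1⟩
  refine ⟨?_, ?_, ?_⟩
  · intro s hs heqs
    obtain ⟨hs0, hs1⟩ := hordS s hs
    have hid := part1_id hBlow hs0 hs1 heqs
    rw [eq_div_iff hBtop, hid]
    ring
  · intro s₁ s₂ h1 h2 he1 he2 hag
    obtain ⟨hs0₁, hs1₁⟩ := hordS s₁ h1
    obtain ⟨hs0₂, hs1₂⟩ := hordS s₂ h2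
    exact uniq_core hν hA hBlow hs0₁ hs1₁ hs0₂ hs1₂ he1 he2 hag
  · intro hsumA hsumB s hs heqs
    obtain ⟨hs0, hs1⟩ := hordS s hs
    exact conv_core hν hA hBlow hs0 hs1 heqs hsumA hsumB
end

section
/- If a polynomial F ∈ ℂ[y,p] satisfies F(x + c·x², 1 + 2·c·x) = 0 in the formal power series ring ℂ[[x]] for every c ∈ ℂ, then F = 0. In other words, the one-parameter family y_c(x) = x + c·x² (c ∈ ℂ) is not a family of solutions of any nonzero autonomous first-order algebraic ordinary differential equation F(y, y') = 0. -/
open MvPolynomial Polynomial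

/-- The one-parameter family `y_c(x) = x + c x²` is not a family of solutions of any
nonzero autonomous first-order AODE: if `F ∈ ℂ[y, p]` satisfies
`F(x + c x², 1 + 2 c x) = 0` in `ℂ[[x]]` for every `c ∈ ℂ`, then `F = 0`.
Here variable `0` of `F` plays the role of `y` and variable `1` that of `p = y'`. -/
theorem family_not_solution_of_autonomous_ode
    (F : MvPolynomial (Fin 2) ℂ)
    (hsol : ∀ c : ℂ,
      MvPolynomial.aeval
        ![PowerSeries.X + PowerSeries.C c * PowerSeries.X ^ 2,
          1 + 2 * PowerSeries.C c * PowerSeries.X] F = (0 : PowerSeries ℂ)) :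
    F = 0 := by
  have hinj : Function.Injective (Polynomial.coeToPowerSeries.algHom (R := ℂ) ℂ) := by
    intro p q h
    simpa [Polynomial.coeToPowerSeries.algHom_apply, Polynomial.algebraMap_eq,
      PowerSeries.map_id] using h
  -- Step 1: as polynomials in x
  have hpoly : ∀ c : ℂ,
      MvPolynomial.aeval
        ![(Polynomial.X : Polynomial ℂ) + Polynomial.C c * Polynomial.X ^ 2,
          1 + 2 * Polynomial.C c * Polynomial.X] F = 0 := by
    intro c
    apply hinj
    rw [map_zero, MvPolynomial.comp_aeval_apply]
    have h2 : ((2 : Polynomial ℂ) : PowerSeries ℂ) = 2 := by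
      have e : (2 : Polynomial ℂ) = Polynomial.C 2 := (map_ofNat (Polynomial.C : ℂ →+* Polynomial ℂ) 2).symm
      rw [e, Polynomial.coe_C]
      simp [map_ofNat]
    have hv : (fun i => (Polynomial.coeToPowerSeries.algHom (R := ℂ) ℂ)
          (![(Polynomial.X : Polynomial ℂ) + Polynomial.C c * Polynomial.X ^ 2,
            1 + 2 * Polynomial.C c * Polynomial.X] i))
        = ![PowerSeries.X + PowerSeries.C c * PowerSeries.X ^ 2,
            1 + 2 * PowerSeries.C c * PowerSeries.X] := by
      funext i
      fin_cases i <;>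
        simp [Polynomial.coeToPowerSeries.algHom_apply, Polynomial.algebraMap_eq,
          PowerSeries.map_id, Polynomial.coe_add, Polynomial.coe_mul, Polynomial.coe_pow,
          Polynomial.coe_X, Polynomial.coe_C, Polynomial.coe_one, h2]
    rw [hv]
    exact hsol c
  -- Step 2: evaluate at a point x₀
  have heval : ∀ c x₀ : ℂ,
      MvPolynomial.aeval ![x₀ + c * x₀ ^ 2, 1 + 2 * c * x₀] F = 0 := by
    intro c x₀
    have h := congrArg (Polynomial.aeval x₀ : Polynomial ℂ →ₐ[ℂ] ℂ) (hpoly c)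
    rw [map_zero, MvPolynomial.comp_aeval_apply] at h
    have hv : (fun i => (Polynomial.aeval x₀ : Polynomial ℂ →ₐ[ℂ] ℂ)
          (![(Polynomial.X : Polynomial ℂ) + Polynomial.C c * Polynomial.X ^ 2,
            1 + 2 * Polynomial.C c * Polynomial.X] i))
        = ![x₀ + c * x₀ ^ 2, 1 + 2 * c * x₀] := by
      funext i; fin_cases i <;> simp
    rwa [hv] at h
  -- Step 3: vanishing at all (a, b) with a ≠ 0, b ≠ -1
  have hab : ∀ a b : ℂ, a ≠ 0 → b ≠ -1 → MvPolynomial.aeval ![a, b] F = 0 := by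
    intro a b ha hb
    have hb1 : b + 1 ≠ 0 := by intro h; apply hb; linear_combination h
    have h := heval ((b - 1) * (b + 1) / (4 * a)) (2 * a / (b + 1))
    have hv : (![2 * a / (b + 1) + (b - 1) * (b + 1) / (4 * a) * (2 * a / (b + 1)) ^ 2,
          1 + 2 * ((b - 1) * (b + 1) / (4 * a)) * (2 * a / (b + 1))] : Fin 2 → ℂ)
        = ![a, b] := by
      funext i; fin_cases i <;> simp <;> field_simp <;> ring
    rwa [hv] at h
  -- Step 4: vanishing at all (a, b) with b ≠ -1
  have hab' : ∀ a b : ℂ, b ≠ -1 → MvPolynomial.aeval ![a, b] F = 0 := by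
    intro a b hb
    have key : (MvPolynomial.aeval ![(Polynomial.X : Polynomial ℂ), Polynomial.C b] F) = 0 := by
      apply Polynomial.eq_zero_of_infinite_isRoot
      apply Set.Infinite.mono (s := {x : ℂ | x ≠ 0})
      · intro x hx
        simp only [Set.mem_setOf_eq, Polynomial.IsRoot]
        rw [← Polynomial.coe_aeval_eq_eval, MvPolynomial.comp_aeval_apply]
        have hv : (fun i => (Polynomial.aeval x : Polynomial ℂ →ₐ[ℂ] ℂ)
              (![(Polynomial.X : Polynomial ℂ), Polynomial.C b] i)) = ![x, b] := by
          funext i; fin_cases i <;> simp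
        rw [hv]
        exact hab x b hx hb
      · exact (Set.finite_singleton 0).infinite_compl
    have h := congrArg (Polynomial.aeval a : Polynomial ℂ →ₐ[ℂ] ℂ) key
    rw [map_zero, MvPolynomial.comp_aeval_apply] at h
    have hv : (fun i => (Polynomial.aeval a : Polynomial ℂ →ₐ[ℂ] ℂ)
          (![(Polynomial.X : Polynomial ℂ), Polynomial.C b] i)) = ![a, b] := by
      funext i; fin_cases i <;> simp
    rwa [hv] at h
  -- Step 5: vanishing everywhere
  have hall : ∀ a b : ℂ, MvPolynomial.aeval ![a, b] F = 0 := by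
    intro a b
    have key : (MvPolynomial.aeval ![Polynomial.C a, (Polynomial.X : Polynomial ℂ)] F) = 0 := by
      apply Polynomial.eq_zero_of_infinite_isRoot
      apply Set.Infinite.mono (s := {x : ℂ | x ≠ -1})
      · intro x hx
        simp only [Set.mem_setOf_eq, Polynomial.IsRoot]
        rw [← Polynomial.coe_aeval_eq_eval, MvPolynomial.comp_aeval_apply]
        have hv : (fun i => (Polynomial.aeval x : Polynomial ℂ →ₐ[ℂ] ℂ)
              (![Polynomial.C a, (Polynomial.X : Polynomial ℂ)] i)) = ![a, x] := by
          funext i; fin_cases i <;> simp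
        rw [hv]
        exact hab' a x hx
      · exact (Set.finite_singleton (-1)).infinite_compl
    have h := congrArg (Polynomial.aeval b : Polynomial ℂ →ₐ[ℂ] ℂ) key
    rw [map_zero, MvPolynomial.comp_aeval_apply] at h
    have hv : (fun i => (Polynomial.aeval b : Polynomial ℂ →ₐ[ℂ] ℂ)
          (![Polynomial.C a, (Polynomial.X : Polynomial ℂ)] i)) = ![a, b] := by
      funext i; fin_cases i <;> simp
    rwa [hv] at h
  -- conclude
  apply MvPolynomial.funext
  intro x
  rw [map_zero]
  have hx : x = ![x 0, x 1] := by funext i; fin_cases i <;> rfl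
  have h := hall (x 0) (x 1)
  have heq : MvPolynomial.eval x F = MvPolynomial.aeval x F := by
    rw [← MvPolynomial.coe_aeval_eq_eval]
    rfl
  rw [heq, hx]
  exact h
end

section
/- Let n, k ≥ 1 be integers and let B1, B2 ∈ ℂ[[u]] be formal power series with B1(0) = B2(0) ≠ 0, and let m ≥ 1 be the least index with coeff_m(B1) ≠ coeff_m(B2). For i = 1, 2, let s_i ∈ ℂ[[t]] with ord(s_i) = 1 satisfy k·s_i(t)^{n−1}·s_i'(t) = n·t^{n−1}·B_i(s_i(t)), and assume coeff_1(s1) = coeff_1(s2). Then coeff_i(s1) = coeff_i(s2) for all i ≤ m, coeff_{m+1}(s1) ≠ coeff_{m+1}(s2), and consequently the power series s1(t)^k and s2(t)^k coincide in all coefficients of t^j with j < k + m but differ in the coefficient of t^{k+m}. -/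
namespace TruncAux
open PowerSeries Finset


lemma coeff_pow_zero_of_lt {s : PowerSeries ℂ} (h0 : constantCoeff s = 0)
    {K i : ℕ} (hi : i < K) : PowerSeries.coeff i (s ^ K) = 0 := by
  have hX : (X : PowerSeries ℂ) ∣ s := X_dvd_iff.mpr h0
  have h2 : (X : PowerSeries ℂ) ^ K ∣ s ^ K := pow_dvd_pow_of_dvd hX K
  exact X_pow_dvd_iff.mp h2 i hi

lemma coeff_pow_congr {s₁ s₂ : PowerSeries ℂ} (h1 : constantCoeff s₁ = 0)
    (h2 : constantCoeff s₂ = 0) {r : ℕ}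
    (hagree : ∀ i ≤ r, PowerSeries.coeff i s₁ = PowerSeries.coeff i s₂) :
    ∀ K j, j < K + r → PowerSeries.coeff j (s₁ ^ K) = PowerSeries.coeff j (s₂ ^ K) := by
  intro K
  induction K with
  | zero => intro j _; rfl
  | succ K ih =>
    intro j hj
    rw [pow_succ, pow_succ, PowerSeries.coeff_mul, PowerSeries.coeff_mul]
    apply Finset.sum_congr rfl
    intro p hp
    rw [Finset.HasAntidiagonal.mem_antidiagonal] at hp
    rcases Nat.eq_zero_or_pos p.2 with h | h
    · rw [h]
      simp [PowerSeries.coeff_zero_eq_constantCoeff, h1, h2]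
    · rcases le_or_gt p.2 r with hle | hlt
      · rw [hagree p.2 hle, ih p.1 (by omega)]
      · have hp1 : p.1 < K := by omega
        rw [coeff_pow_zero_of_lt h1 hp1, coeff_pow_zero_of_lt h2 hp1, zero_mul, zero_mul]

lemma coeff_pow_self {s : PowerSeries ℂ} (h0 : constantCoeff s = 0) :
    ∀ K, PowerSeries.coeff K (s ^ K) = (PowerSeries.coeff 1 s) ^ K := by
  intro K
  induction K with
  | zero => simp
  | succ K ih =>
    rw [pow_succ, PowerSeries.coeff_mul, Finset.sum_eq_single (K, 1)]
    · rw [ih, pow_succ]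
    · intro p hp hne
      rw [Finset.HasAntidiagonal.mem_antidiagonal] at hp
      rcases Nat.eq_zero_or_pos p.2 with h | h
      · rw [h]; simp [PowerSeries.coeff_zero_eq_constantCoeff, h0]
      · by_cases hq : p.2 = 1
        · exfalso
          exact hne (Prod.ext (by omega) hq)
        · have : p.1 < K := by omega
          rw [coeff_pow_zero_of_lt h0 this, zero_mul]
    · intro hmem
      exact absurd (by simp : ((K, 1) : ℕ × ℕ) ∈ Finset.HasAntidiagonal.antidiagonal (K + 1)) hmem

lemma coeff_pow_sub {s₁ s₂ : PowerSeries ℂ} (h1 : constantCoeff s₁ = 0)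
    (h2 : constantCoeff s₂ = 0) {r : ℕ} (hr : 1 ≤ r)
    (hagree : ∀ i ≤ r, PowerSeries.coeff i s₁ = PowerSeries.coeff i s₂) :
    ∀ K, PowerSeries.coeff (K + r) (s₁ ^ K) - PowerSeries.coeff (K + r) (s₂ ^ K)
      = (K : ℂ) * (PowerSeries.coeff 1 s₁) ^ (K - 1) *
        (PowerSeries.coeff (r + 1) s₁ - PowerSeries.coeff (r + 1) s₂) := by
  intro K
  induction K with
  | zero => simp
  | succ K ih =>
    set c₁ := PowerSeries.coeff 1 s₁ with hc₁
    have hc1eq : PowerSeries.coeff 1 s₂ = c₁ := (hagree 1 hr).symm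
    set Δ := PowerSeries.coeff (r + 1) s₁ - PowerSeries.coeff (r + 1) s₂ with hΔ
    have key : PowerSeries.coeff (K + 1 + r) (s₁ ^ (K + 1))
        - PowerSeries.coeff (K + 1 + r) (s₂ ^ (K + 1))
        = ∑ p ∈ Finset.HasAntidiagonal.antidiagonal (K + 1 + r),
            (PowerSeries.coeff p.1 (s₁ ^ K) * PowerSeries.coeff p.2 s₁
             - PowerSeries.coeff p.1 (s₂ ^ K) * PowerSeries.coeff p.2 s₂) := by
      rw [pow_succ, pow_succ, PowerSeries.coeff_mul, PowerSeries.coeff_mul,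
        Finset.sum_sub_distrib]
    rw [key]
    have hsub : ({(K + r, 1), (K, r + 1)} : Finset (ℕ × ℕ))
        ⊆ Finset.HasAntidiagonal.antidiagonal (K + 1 + r) := by
      intro p hp
      simp only [Finset.mem_insert, Finset.mem_singleton] at hp
      rcases hp with rfl | rfl <;> rw [Finset.HasAntidiagonal.mem_antidiagonal] <;> omega
    have hzero : ∀ p ∈ Finset.HasAntidiagonal.antidiagonal (K + 1 + r),
        p ∉ ({(K + r, 1), (K, r + 1)} : Finset (ℕ × ℕ)) →
        PowerSeries.coeff p.1 (s₁ ^ K) * PowerSeries.coeff p.2 s₁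
          - PowerSeries.coeff p.1 (s₂ ^ K) * PowerSeries.coeff p.2 s₂ = 0 := by
      intro p hp hnot
      rw [Finset.HasAntidiagonal.mem_antidiagonal] at hp
      simp only [Finset.mem_insert, Finset.mem_singleton] at hnot
      push_neg at hnot
      rcases Nat.eq_zero_or_pos p.2 with h | hpos
      · have : p.2 = 0 := h
        rw [this]
        simp [PowerSeries.coeff_zero_eq_constantCoeff, h1, h2]
      · rcases Nat.lt_or_ge p.2 (r + 1) with hlt | hge
        · -- 1 ≤ p.2 ≤ r
          have hne1 : p.2 ≠ 1 ∨ p.1 ≠ K + r := by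
            rcases hnot with ⟨h', _⟩
            by_cases hq : p.2 = 1
            · right; intro hK; exact h' (Prod.ext hK hq)
            · left; exact hq
          have hq2 : p.2 ≤ r := by omega
          have hsame : PowerSeries.coeff p.2 s₁ = PowerSeries.coeff p.2 s₂ :=
            hagree p.2 hq2
          by_cases hq1 : p.2 = 1
          · have hP1 : p.1 = K + r := by omega
            rcases hne1 with h' | h'
            · exact absurd hq1 h'
            · exact absurd hP1 h'
          · have hp1lt : p.1 < K + r := by omega
            rw [coeff_pow_congr h1 h2 hagree K p.1 hp1lt, hsame]
            ring
        · rcases Nat.lt_or_ge (r + 1) p.2 with hlt2 | hge2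
          · have : p.1 < K := by omega
            rw [coeff_pow_zero_of_lt h1 this, coeff_pow_zero_of_lt h2 this]
            ring
          · have hq : p.2 = r + 1 := by omega
            have hP1 : p.1 = K := by omega
            exact absurd (Prod.ext hP1 hq) hnot.2
    rw [← Finset.sum_subset hsub hzero]
    have hne : ((K + r, 1) : ℕ × ℕ) ≠ (K, r + 1) := by
      intro h
      have := congrArg Prod.fst h
      simp at this
      omega
    rw [Finset.sum_pair hne]
    have e1 : PowerSeries.coeff (K + r) (s₁ ^ K) * PowerSeries.coeff 1 s₁
        - PowerSeries.coeff (K + r) (s₂ ^ K) * PowerSeries.coeff 1 s₂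
        = c₁ * ((K : ℂ) * c₁ ^ (K - 1) * Δ) := by
      rw [hc1eq, ← hc₁, ← ih]; ring
    have e2 : PowerSeries.coeff K (s₁ ^ K) * PowerSeries.coeff (r + 1) s₁
        - PowerSeries.coeff K (s₂ ^ K) * PowerSeries.coeff (r + 1) s₂
        = c₁ ^ K * Δ := by
      rw [coeff_pow_self h1, coeff_pow_self h2, hc1eq, ← hc₁, hΔ]; ring
    rw [e1, e2]
    rcases Nat.eq_zero_or_pos K with hK | hK
    · subst hK; simp
    · have hK1 : K - 1 + 1 = K := by omega
      push_cast
      have hcp : c₁ ^ K = c₁ ^ (K - 1) * c₁ := by rw [← pow_succ, hK1]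
      rw [hcp]; ring

lemma coeff_pscomp (B s : PowerSeries ℂ) (j : ℕ) :
    PowerSeries.coeff j (pscomp B s)
      = ∑ q ∈ Finset.range (j + 1), PowerSeries.coeff q B * PowerSeries.coeff j (s ^ q) := by
  rw [pscomp, PowerSeries.coeff_mk]

lemma comp_congr {B₁ B₂ s₁ s₂ : PowerSeries ℂ} (h1 : constantCoeff s₁ = 0)
    (h2 : constantCoeff s₂ = 0) {r : ℕ}
    (hB : ∀ q ≤ r, PowerSeries.coeff q B₁ = PowerSeries.coeff q B₂)
    (hagree : ∀ i ≤ r, PowerSeries.coeff i s₁ = PowerSeries.coeff i s₂) :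
    PowerSeries.coeff r (pscomp B₁ s₁) = PowerSeries.coeff r (pscomp B₂ s₂) := by
  rw [coeff_pscomp, coeff_pscomp]
  apply Finset.sum_congr rfl
  intro q hq
  rw [Finset.mem_range] at hq
  rcases Nat.eq_zero_or_pos q with h | h
  · subst h
    rw [hB 0 (by omega), pow_zero, pow_zero]
  · rw [hB q (by omega), coeff_pow_congr h1 h2 hagree q r (by omega)]

lemma comp_sub_at {B₁ B₂ s₁ s₂ : PowerSeries ℂ} (h1 : constantCoeff s₁ = 0)
    (h2 : constantCoeff s₂ = 0) {m : ℕ} (hm : 1 ≤ m)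
    (hB : ∀ q, q < m → PowerSeries.coeff q B₁ = PowerSeries.coeff q B₂)
    (hagree : ∀ i ≤ m, PowerSeries.coeff i s₁ = PowerSeries.coeff i s₂) :
    PowerSeries.coeff m (pscomp B₁ s₁) - PowerSeries.coeff m (pscomp B₂ s₂)
      = (PowerSeries.coeff m B₁ - PowerSeries.coeff m B₂)
        * (PowerSeries.coeff 1 s₁) ^ m := by
  rw [coeff_pscomp, coeff_pscomp, ← Finset.sum_sub_distrib, Finset.sum_eq_single m]
  · rw [coeff_pow_self h1, coeff_pow_self h2, hagree 1 hm]
    ring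
  · intro q hq hne
    rw [Finset.mem_range] at hq
    have hqm : q < m := by omega
    rw [hB q hqm]
    rcases Nat.eq_zero_or_pos q with h | h
    · subst h; ring
    · rw [coeff_pow_congr h1 h2 hagree q m (by omega)]; ring
  · intro h
    exact absurd (Finset.mem_range.mpr (by omega)) h

lemma ode_coeff {n kk : ℕ} (hn : 1 ≤ n) {s C : PowerSeries ℂ}
    (heq : (kk : PowerSeries ℂ) * s ^ (n - 1) * s.derivativeFun
      = (n : PowerSeries ℂ) * PowerSeries.X ^ (n - 1) * C) (r : ℕ) :
    (kk : ℂ) * ((n : ℂ) + r) * PowerSeries.coeff (n + r) (s ^ n)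
      = (n : ℂ) * ((n : ℂ) * PowerSeries.coeff r C) := by
  have hpow : derivativeFun (s ^ n)
      = (n : PowerSeries ℂ) * (s ^ (n - 1) * derivativeFun s) := by
    have h := Derivation.leibniz_pow (PowerSeries.derivative ℂ) (a := s) n
    rw [nsmul_eq_mul, smul_eq_mul] at h
    exact h
  have h2 := congrArg
    (fun f => PowerSeries.coeff (n - 1 + r) ((n : PowerSeries ℂ) * f)) heq
  have hL : (n : PowerSeries ℂ) * ((kk : PowerSeries ℂ) * s ^ (n - 1) * s.derivativeFun)
      = (kk : PowerSeries ℂ) * derivativeFun (s ^ n) := by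
    rw [hpow]; ring
  have hR : (n : PowerSeries ℂ) * ((n : PowerSeries ℂ) * PowerSeries.X ^ (n - 1) * C)
      = (n : PowerSeries ℂ) * ((n : PowerSeries ℂ) * (PowerSeries.X ^ (n - 1) * C)) := by
    ring
  rw [hL, hR] at h2
  rw [← map_natCast (PowerSeries.C) kk, ← map_natCast (PowerSeries.C) n,
    PowerSeries.coeff_C_mul, PowerSeries.coeff_C_mul, PowerSeries.coeff_C_mul] at h2
  rw [show n - 1 + r = r + (n - 1) by omega, PowerSeries.coeff_X_pow_mul] at h2
  rw [show (s ^ n).derivativeFun = PowerSeries.derivative ℂ (s ^ n) from rfl,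
    PowerSeries.coeff_derivative, show r + (n - 1) + 1 = n + r by omega] at h2
  have hcast : ((r + (n - 1) : ℕ) : ℂ) + 1 = (n : ℂ) + (r : ℂ) := by
    have h3 : r + (n - 1) + 1 = n + r := by omega
    calc ((r + (n - 1) : ℕ) : ℂ) + 1 = ((r + (n - 1) + 1 : ℕ) : ℂ) := by push_cast; ring
      _ = ((n + r : ℕ) : ℂ) := by rw [h3]
      _ = (n : ℂ) + r := by push_cast; ring
  rw [hcast] at h2
  rw [← h2]
  ring

end TruncAux

open TruncAux

/-- Distinctness of truncations: let `B₁, B₂` share the nonzero constant term and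
first differ at index `m ≥ 1`, and let `s₁, s₂` be order-one solutions of
`k sᵢ(t)^{n-1} sᵢ'(t) = n t^{n-1} Bᵢ(sᵢ(t))` with the same first coefficient. Then
`s₁` and `s₂` agree up to index `m`, differ at index `m + 1`, and `s₁^k`, `s₂^k`
agree in all coefficients of index `< k + m` but differ at index `k + m`. -/
theorem truncations_are_distinct
    (n k : ℕ) (hn : 1 ≤ n) (hk : 1 ≤ k) (B₁ B₂ : PowerSeries ℂ)
    (hB0 : PowerSeries.constantCoeff B₁ = PowerSeries.constantCoeff B₂)
    (hB0ne : PowerSeries.constantCoeff B₁ ≠ 0)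
    (m : ℕ) (hm : 1 ≤ m)
    (hmne : PowerSeries.coeff m B₁ ≠ PowerSeries.coeff m B₂)
    (hmmin : ∀ i : ℕ, i < m → PowerSeries.coeff i B₁ = PowerSeries.coeff i B₂)
    (s₁ s₂ : PowerSeries ℂ) (hs₁ : s₁.order = 1) (hs₂ : s₂.order = 1)
    (heq₁ : (k : PowerSeries ℂ) * s₁ ^ (n - 1) * s₁.derivativeFun
      = (n : PowerSeries ℂ) * PowerSeries.X ^ (n - 1) * pscomp B₁ s₁)
    (heq₂ : (k : PowerSeries ℂ) * s₂ ^ (n - 1) * s₂.derivativeFun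
      = (n : PowerSeries ℂ) * PowerSeries.X ^ (n - 1) * pscomp B₂ s₂)
    (hc1 : PowerSeries.coeff 1 s₁ = PowerSeries.coeff 1 s₂) :
    (∀ i : ℕ, i ≤ m → PowerSeries.coeff i s₁ = PowerSeries.coeff i s₂) ∧
    PowerSeries.coeff (m + 1) s₁ ≠ PowerSeries.coeff (m + 1) s₂ ∧
    (∀ j : ℕ, j < k + m → PowerSeries.coeff j (s₁ ^ k) = PowerSeries.coeff j (s₂ ^ k)) ∧
    PowerSeries.coeff (k + m) (s₁ ^ k) ≠ PowerSeries.coeff (k + m) (s₂ ^ k) := by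
  have h1' := PowerSeries.order_eq_nat.mp (show s₁.order = (1 : ℕ) by exact_mod_cast hs₁)
  have h2' := PowerSeries.order_eq_nat.mp (show s₂.order = (1 : ℕ) by exact_mod_cast hs₂)
  have h01 : PowerSeries.constantCoeff s₁ = 0 := by
    rw [← PowerSeries.coeff_zero_eq_constantCoeff_apply]
    exact h1'.2 0 one_pos
  have h02 : PowerSeries.constantCoeff s₂ = 0 := by
    rw [← PowerSeries.coeff_zero_eq_constantCoeff_apply]
    exact h2'.2 0 one_pos
  set c₁ := PowerSeries.coeff 1 s₁ with hc₁def
  have hc₁ne : c₁ ≠ 0 := h1'.1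
  have hkne : (k : ℂ) ≠ 0 := Nat.cast_ne_zero.mpr (by omega)
  have hnne : (n : ℂ) ≠ 0 := Nat.cast_ne_zero.mpr (by omega)
  -- agreement up to m
  have agree : ∀ r, 1 ≤ r → r ≤ m →
      ∀ i ≤ r, PowerSeries.coeff i s₁ = PowerSeries.coeff i s₂ := by
    intro r hr
    induction r, hr using Nat.le_induction with
    | base =>
      intro _ i hi
      interval_cases i
      · rw [PowerSeries.coeff_zero_eq_constantCoeff_apply,
          PowerSeries.coeff_zero_eq_constantCoeff_apply, h01, h02]
      · exact hc1
    | succ r hr ih =>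
      intro hrm i hi
      have hA := ih (by omega)
      rcases Nat.lt_or_ge i (r + 1) with h | h
      · exact hA i (by omega)
      · have hieq : i = r + 1 := by omega
        subst hieq
        have hode₁ := ode_coeff hn heq₁ r
        have hode₂ := ode_coeff hn heq₂ r
        have hC : PowerSeries.coeff r (pscomp B₁ s₁)
            = PowerSeries.coeff r (pscomp B₂ s₂) :=
          comp_congr h01 h02 (fun q hq => hmmin q (by omega)) hA
        have hzero : (k : ℂ) * ((n : ℂ) + r) *
            (PowerSeries.coeff (n + r) (s₁ ^ n)
              - PowerSeries.coeff (n + r) (s₂ ^ n)) = 0 := by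
          rw [mul_sub, hode₁, hode₂, hC, sub_self]
        rw [coeff_pow_sub h01 h02 hr hA n] at hzero
        have hfac : (k : ℂ) * ((n : ℂ) + r) * ((n : ℂ) * c₁ ^ (n - 1)) ≠ 0 := by
          apply mul_ne_zero (mul_ne_zero hkne _) (mul_ne_zero hnne (pow_ne_zero _ hc₁ne))
          have : ((n + r : ℕ) : ℂ) ≠ 0 := Nat.cast_ne_zero.mpr (by omega)
          push_cast at this
          exact this
        have hΔ : PowerSeries.coeff (r + 1) s₁ - PowerSeries.coeff (r + 1) s₂ = 0 := by
          have hfac1 : (k : ℂ) * ((n : ℂ) + r) ≠ 0 := by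
            apply mul_ne_zero hkne
            have : ((n + r : ℕ) : ℂ) ≠ 0 := Nat.cast_ne_zero.mpr (by omega)
            push_cast at this
            exact this
          have hfac2 : (n : ℂ) * c₁ ^ (n - 1) ≠ 0 :=
            mul_ne_zero hnne (pow_ne_zero _ hc₁ne)
          rcases mul_eq_zero.mp hzero with h' | h'
          · exact absurd h' hfac1
          · rcases mul_eq_zero.mp h' with h'' | h''
            · exact absurd h'' hfac2
            · exact h''
        exact sub_eq_zero.mp hΔ
  have part1 : ∀ i ≤ m, PowerSeries.coeff i s₁ = PowerSeries.coeff i s₂ :=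
    agree m hm le_rfl
  -- difference at m+1
  have hode₁ := ode_coeff hn heq₁ m
  have hode₂ := ode_coeff hn heq₂ m
  have hCm : PowerSeries.coeff m (pscomp B₁ s₁) - PowerSeries.coeff m (pscomp B₂ s₂)
      = (PowerSeries.coeff m B₁ - PowerSeries.coeff m B₂) * c₁ ^ m :=
    comp_sub_at h01 h02 hm hmmin part1
  have hkey : (k : ℂ) * ((n : ℂ) + m) *
      ((n : ℂ) * c₁ ^ (n - 1) *
        (PowerSeries.coeff (m + 1) s₁ - PowerSeries.coeff (m + 1) s₂))
      = (n : ℂ) * ((n : ℂ) * ((PowerSeries.coeff m B₁ - PowerSeries.coeff m B₂) * c₁ ^ m)) := by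
    rw [← coeff_pow_sub h01 h02 hm part1 n, mul_sub, hode₁, hode₂, ← hCm]
    ring
  have hRHSne : (n : ℂ) * ((n : ℂ) * ((PowerSeries.coeff m B₁ - PowerSeries.coeff m B₂) * c₁ ^ m)) ≠ 0 :=
    mul_ne_zero hnne (mul_ne_zero hnne
      (mul_ne_zero (sub_ne_zero.mpr hmne) (pow_ne_zero _ hc₁ne)))
  have part2 : PowerSeries.coeff (m + 1) s₁ ≠ PowerSeries.coeff (m + 1) s₂ := by
    intro hcontra
    apply hRHSne
    rw [← hkey, sub_eq_zero.mpr hcontra]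
    ring
  refine ⟨part1, part2, ?_, ?_⟩
  · intro j hj
    exact coeff_pow_congr h01 h02 part1 k j (by omega)
  · have := coeff_pow_sub h01 h02 hm part1 k
    intro hcontra
    rw [sub_eq_zero.mpr hcontra] at this
    have hfac : (k : ℂ) * c₁ ^ (k - 1) *
        (PowerSeries.coeff (m + 1) s₁ - PowerSeries.coeff (m + 1) s₂) ≠ 0 :=
      mul_ne_zero (mul_ne_zero hkne (pow_ne_zero _ hc₁ne)) (sub_ne_zero.mpr part2)
    exact hfac this.symm
end
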